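/- arXiv:1508.00249 — 3 statements merged into one kernel-verified Lean document; each statement's English description precedes it below -/
import Mathlib

section
/- Constrained risk inequality (Cai–Low, as used in the paper): Let (Ω,𝒜) be a measurable space, Θ a measurable parameter space, and θ ↦ P_θ a Markov kernel of probability distributions for an observation Z. Let Q : Θ → ℝ be a measurable functional and Q̂ : Ω → ℝ an estimator with E_θ(Q̂²) < ∞ for all θ; write B(θ) = E_θ(Q̂) − Q(θ) for its bias. Let π₀ and π₁ be prior probability measures supported on disjoint measurable subsets Θ₀ and Θ₁ of Θ, with μ_i = ∫ Q(θ) dπ_i(θ) and σ_i² = ∫ (Q(θ) − μ_i)² dπ_i(θ) finite for i = 0,1. Let γ₀ and γ₁ be the marginal densities of Z under priors π₀ and π₁ with respect to a common dominating σ-finite measure, with γ₀ > 0 a.e., and set χ = ( E_{γ₀}[ (γ₁/γ₀ − 1)² ] )^{1/2}, where E_{γ₀} is expectation under the π₀-marginal law of Z. If ∫ E_θ[(Q̂(Z) − Q(θ))²] dπ₀(θ) ≤ ε², then |∫ B(θ) dπ₁(θ) − ∫ B(θ) dπ₀(θ)| ≥ |μ₁ − μ₀| − (ε + σ₀)χ.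 -/
open MeasureTheory Set Filter
open scoped ProbabilityTheory ENNReal NNReal

lemma cs_integrable {α : Type*} [MeasurableSpace α] {μ : Measure α} {f g : α → ℝ}
    (hfm : AEStronglyMeasurable f μ) (hgm : AEStronglyMeasurable g μ)
    (hf : Integrable (fun x => f x ^ 2) μ) (hg : Integrable (fun x => g x ^ 2) μ) :
    Integrable (fun x => f x * g x) μ := by
  have hint : Integrable (fun x => (f x ^ 2 + g x ^ 2) / 2) μ := (hf.add hg).div_const 2
  refine hint.mono (hfm.mul hgm) (Eventually.of_forall fun x => ?_)
  have h1 : |f x * g x| ≤ (f x ^ 2 + g x ^ 2) / 2 := by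
    rw [abs_mul]
    nlinarith [sq_nonneg (|f x| - |g x|), sq_abs (f x), sq_abs (g x)]
  calc ‖f x * g x‖ = |f x * g x| := rfl
    _ ≤ (f x ^ 2 + g x ^ 2) / 2 := h1
    _ ≤ ‖(f x ^ 2 + g x ^ 2) / 2‖ := le_abs_self _

lemma cs_bound {α : Type*} [MeasurableSpace α] {μ : Measure α} {f g : α → ℝ}
    (hfm : AEStronglyMeasurable f μ) (hgm : AEStronglyMeasurable g μ)
    (hf : Integrable (fun x => f x ^ 2) μ) (hg : Integrable (fun x => g x ^ 2) μ) :
    |∫ x, f x * g x ∂μ| ≤ Real.sqrt (∫ x, f x ^ 2 ∂μ) * Real.sqrt (∫ x, g x ^ 2 ∂μ) := by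
  have hfg := cs_integrable hfm hgm hf hg
  set A := ∫ x, f x ^ 2 ∂μ with hA'
  set B := ∫ x, g x ^ 2 ∂μ with hB'
  set C := ∫ x, f x * g x ∂μ with hC'
  have hA : 0 ≤ A := integral_nonneg fun x => sq_nonneg _
  have key : discrim A (2 * C) B ≤ 0 := by
    apply discrim_le_zero
    intro t
    have h0 : 0 ≤ ∫ x, (t * f x + g x) ^ 2 ∂μ := integral_nonneg fun x => sq_nonneg _
    have i1 : Integrable (fun x => t * t * f x ^ 2 + 2 * t * (f x * g x)) μ :=
      (hf.const_mul _).add (hfg.const_mul _)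
    have e1 : ∫ x, (t * f x + g x) ^ 2 ∂μ
        = ∫ x, (t * t * f x ^ 2 + 2 * t * (f x * g x)) + g x ^ 2 ∂μ := by
      congr 1; ext x; ring
    rw [e1, integral_add i1 hg, integral_add (hf.const_mul _) (hfg.const_mul _),
      integral_const_mul, integral_const_mul, ← hA', ← hB', ← hC'] at h0
    linarith
  rw [discrim] at key
  have hC2 : C ^ 2 ≤ A * B := by nlinarith
  calc |C| = Real.sqrt (C ^ 2) := (Real.sqrt_sq_eq_abs C).symm
    _ ≤ Real.sqrt (A * B) := Real.sqrt_le_sqrt hC2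
    _ = Real.sqrt A * Real.sqrt B := Real.sqrt_mul hA B

lemma l1_of_l2 {α : Type*} [MeasurableSpace α] (μ : Measure α) [IsProbabilityMeasure μ]
    {f : α → ℝ} (hm : AEStronglyMeasurable f μ)
    (hf : Integrable (fun x => f x ^ 2) μ) : Integrable f μ := by
  refine ((hf.add (integrable_const 1)).div_const 2).mono hm (Eventually.of_forall fun x => ?_)
  have h1 : |f x| ≤ (f x ^ 2 + 1) / 2 := by
    nlinarith [sq_nonneg (|f x| - 1), sq_abs (f x)]
  calc ‖f x‖ = |f x| := rfl
    _ ≤ (f x ^ 2 + 1) / 2 := h1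
    _ ≤ ‖(f x ^ 2 + 1) / 2‖ := le_abs_self _

/-- Constrained risk inequality (Cai–Low, as used in the paper). -/
theorem constrained_risk_inequality
    {Ω Θ : Type*} [MeasurableSpace Ω] [MeasurableSpace Θ]
    (P : ProbabilityTheory.Kernel Θ Ω) [ProbabilityTheory.IsMarkovKernel P]
    (ν : Measure Ω) [SigmaFinite ν]
    (Q : Θ → ℝ) (hQmeas : Measurable Q)
    (Qhat : Ω → ℝ) (hQhatmeas : Measurable Qhat)
    (hQhatL2 : ∀ θ : Θ, Integrable (fun z => (Qhat z) ^ 2) (P θ))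
    (π0 π1 : Measure Θ) [IsProbabilityMeasure π0] [IsProbabilityMeasure π1]
    (Θ0 Θ1 : Set Θ) (hΘ0 : MeasurableSet Θ0) (hΘ1 : MeasurableSet Θ1)
    (hdisj : Disjoint Θ0 Θ1) (hπ0supp : π0 Θ0 = 1) (hπ1supp : π1 Θ1 = 1)
    (γ0 γ1 : Ω → ℝ) (hγ0meas : Measurable γ0) (hγ1meas : Measurable γ1)
    (hγ0pos : ∀ᵐ z ∂ν, 0 < γ0 z) (hγ1nonneg : ∀ᵐ z ∂ν, 0 ≤ γ1 z)
    (hγ0 : π0.bind (fun θ => P θ) = ν.withDensity (fun z => ENNReal.ofReal (γ0 z)))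
    (hγ1 : π1.bind (fun θ => P θ) = ν.withDensity (fun z => ENNReal.ofReal (γ1 z)))
    (μ0 μ1 σ0 χ : ℝ)
    (hμ0 : μ0 = ∫ θ, Q θ ∂π0) (hμ1 : μ1 = ∫ θ, Q θ ∂π1)
    (hQint0 : Integrable Q π0) (hQint1 : Integrable Q π1)
    (hσ0 : σ0 = Real.sqrt (∫ θ, (Q θ - μ0) ^ 2 ∂π0))
    (hσ0int : Integrable (fun θ => (Q θ - μ0) ^ 2) π0)
    (hσ1int : Integrable (fun θ => (Q θ - μ1) ^ 2) π1)
    (hχ : χ = Real.sqrt (∫ z, (γ1 z / γ0 z - 1) ^ 2 ∂(π0.bind (fun θ => P θ))))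
    (hχint : Integrable (fun z => (γ1 z / γ0 z - 1) ^ 2) (π0.bind (fun θ => P θ)))
    (B : Θ → ℝ) (hB : ∀ θ : Θ, B θ = (∫ z, Qhat z ∂(P θ)) - Q θ)
    (hBint0 : Integrable B π0) (hBint1 : Integrable B π1)
    (hriskint : Integrable (fun θ => ∫ z, (Qhat z - Q θ) ^ 2 ∂(P θ)) π0)
    (ε : ℝ) (hε : 0 ≤ ε)
    (hrisk : (∫ θ, (∫ z, (Qhat z - Q θ) ^ 2 ∂(P θ)) ∂π0) ≤ ε ^ 2) :
    |μ1 - μ0| - (ε + σ0) * χ ≤ |(∫ θ, B θ ∂π1) - ∫ θ, B θ ∂π0| := by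
  set m0 := π0.bind (fun θ => P θ) with hm0def
  set m1 := π1.bind (fun θ => P θ) with hm1def
  haveI hm0P : IsProbabilityMeasure m0 := by
    constructor
    rw [hm0def, Measure.bind_apply MeasurableSet.univ P.measurable.aemeasurable]
    simp
  haveI hm1P : IsProbabilityMeasure m1 := by
    constructor
    rw [hm1def, Measure.bind_apply MeasurableSet.univ P.measurable.aemeasurable]
    simp
  -- bind = snd of compProd
  have hbind_snd : ∀ (π : Measure Θ), IsProbabilityMeasure π →
      π.bind (fun θ => P θ) = (π ⊗ₘ P).snd := by
    intro π hπ
    haveI := hπ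
    ext s hs
    rw [Measure.bind_apply hs P.measurable.aemeasurable, Measure.snd_apply hs,
      Measure.compProd_apply (measurable_snd hs)]
    rfl
  -- transfer of integrals
  have hIntegral_eq : ∀ (π : Measure Θ), IsProbabilityMeasure π → ∀ f : Ω → ℝ, Measurable f →
      Integrable f (π.bind (fun θ => P θ)) →
      ∫ z, f z ∂(π.bind (fun θ => P θ)) = ∫ θ, ∫ z, f z ∂(P θ) ∂π := by
    intro π hπ f hf hint
    haveI := hπ
    rw [hbind_snd π hπ] at hint ⊢
    rw [Measure.snd] at hint ⊢
    have hint' : Integrable (fun p : Θ × Ω => f p.2) (π ⊗ₘ P) :=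
      (integrable_map_measure hf.aestronglyMeasurable measurable_snd.aemeasurable).mp hint
    rw [integral_map measurable_snd.aemeasurable hf.aestronglyMeasurable,
      Measure.integral_compProd hint']
  -- per-θ integrability
  have hQhatint : ∀ θ, Integrable Qhat (P θ) := fun θ =>
    l1_of_l2 (P θ) hQhatmeas.aestronglyMeasurable (hQhatL2 θ)
  have hdev2int : ∀ θ, Integrable (fun z => (Qhat z - Q θ) ^ 2) (P θ) := by
    intro θ
    have he : (fun z => (Qhat z - Q θ) ^ 2)
        = fun z => (Qhat z ^ 2 - (2 * Q θ) * Qhat z) + Q θ ^ 2 := by funext z; ring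
    rw [he]
    exact ((hQhatL2 θ).sub ((hQhatint θ).const_mul _)).add (integrable_const _)
  set R := fun θ => ∫ z, (Qhat z - Q θ) ^ 2 ∂(P θ) with hRdef
  have hRnn : ∀ θ, 0 ≤ R θ := fun θ => integral_nonneg fun z => sq_nonneg _
  have hBval : ∀ θ, ∫ z, (Qhat z - Q θ) ∂(P θ) = B θ := by
    intro θ
    rw [integral_sub (hQhatint θ) (integrable_const _), integral_const, hB θ]
    simp
  have hBle : ∀ θ, |B θ| ≤ Real.sqrt (R θ) := by
    intro θ
    have h := cs_bound (g := fun _ => (1 : ℝ))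
      ((hQhatmeas.sub_const (Q θ)).aestronglyMeasurable) aestronglyMeasurable_const
      (hdev2int θ) (by simpa using (integrable_const (1 : ℝ) : Integrable _ (P θ)))
    simp only [mul_one, one_pow] at h
    rw [hBval θ] at h
    simpa [hRdef] using h
  -- Q^2 integrable over π0
  have hQsq_int : Integrable (fun θ => Q θ ^ 2) π0 := by
    have he : (fun θ => Q θ ^ 2)
        = fun θ => ((Q θ - μ0) ^ 2 + (2 * μ0) * Q θ) - μ0 ^ 2 := by funext θ; ring
    rw [he]
    exact (hσ0int.add (hQint0.const_mul _)).sub (integrable_const _)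
  -- ∫ Qhat^2 dPθ bound
  have hQ2le : ∀ θ, ∫ z, Qhat z ^ 2 ∂(P θ) ≤ 2 * R θ + 2 * Q θ ^ 2 := by
    intro θ
    have hbd : Integrable (fun z => 2 * (Qhat z - Q θ) ^ 2 + 2 * Q θ ^ 2) (P θ) :=
      ((hdev2int θ).const_mul 2).add (integrable_const _)
    have h := integral_mono (hQhatL2 θ) hbd
      (fun z => by nlinarith [sq_nonneg (Qhat z - 2 * Q θ)])
    rw [integral_add ((hdev2int θ).const_mul 2) (integrable_const _),
      integral_const_mul, integral_const] at h
    simpa [hRdef] using h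
  -- Integrable Qhat^2 w.r.t. m0
  have hQ2m0 : Integrable (fun z => Qhat z ^ 2) m0 := by
    rw [hm0def, hbind_snd π0 ‹_›, Measure.snd]
    rw [integrable_map_measure (hQhatmeas.pow_const 2).aestronglyMeasurable
      measurable_snd.aemeasurable]
    have hsm : AEStronglyMeasurable (fun p : Θ × Ω => Qhat p.2 ^ 2) (π0 ⊗ₘ P) :=
      ((hQhatmeas.comp measurable_snd).pow_const 2).aestronglyMeasurable
    rw [show ((fun z => Qhat z ^ 2) ∘ Prod.snd) = fun p : Θ × Ω => Qhat p.2 ^ 2 from rfl]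
    rw [Measure.integrable_compProd_iff hsm]
    constructor
    · exact Eventually.of_forall fun θ => hQhatL2 θ
    · have hmeas : AEStronglyMeasurable (fun θ => ∫ z, ‖Qhat z ^ 2‖ ∂(P θ)) π0 := by
        have : StronglyMeasurable (fun p : Θ × Ω => ‖Qhat p.2 ^ 2‖) :=
          ((hQhatmeas.comp measurable_snd).pow_const 2).norm.stronglyMeasurable
        exact this.integral_kernel_prod_right'.aestronglyMeasurable
      refine ((hriskint.const_mul 2).add (hQsq_int.const_mul 2)).mono hmeas
        (Eventually.of_forall fun θ => ?_)
      have he : ∫ z, ‖Qhat z ^ 2‖ ∂(P θ) = ∫ z, Qhat z ^ 2 ∂(P θ) := by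
        congr 1; funext z; simp [Real.norm_eq_abs, abs_pow, sq_abs]
      rw [Real.norm_eq_abs, he, abs_of_nonneg (integral_nonneg fun z => sq_nonneg _)]
      refine le_trans (hQ2le θ) (le_abs_self _)
  have hQ1m0 : Integrable Qhat m0 := l1_of_l2 m0 hQhatmeas.aestronglyMeasurable hQ2m0
  have hdev0sq_m0 : Integrable (fun z => (Qhat z - μ0) ^ 2) m0 := by
    have he : (fun z => (Qhat z - μ0) ^ 2)
        = fun z => (Qhat z ^ 2 - (2 * μ0) * Qhat z) + μ0 ^ 2 := by funext z; ring
    rw [he]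
    exact (hQ2m0.sub (hQ1m0.const_mul _)).add (integrable_const _)
  have hgfm : AEStronglyMeasurable (fun z => γ1 z / γ0 z - 1) m0 :=
    ((hγ1meas.div hγ0meas).sub_const 1).aestronglyMeasurable
  have hg1_m0 : Integrable (fun z => γ1 z / γ0 z - 1) m0 := l1_of_l2 m0 hgfm hχint
  have hQg_m0 : Integrable (fun z => (Qhat z - μ0) * (γ1 z / γ0 z - 1)) m0 :=
    cs_integrable ((hQhatmeas.sub_const μ0).aestronglyMeasurable) hgfm hdev0sq_m0 hχint
  -- densities
  have hwd0 : m0 = ν.withDensity (fun z => ((γ0 z).toNNReal : ℝ≥0∞)) := hγ0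
  have hwd1 : m1 = ν.withDensity (fun z => ((γ1 z).toNNReal : ℝ≥0∞)) := hγ1
  have hlint1 : ∫⁻ z, ENNReal.ofReal (γ1 z) ∂ν = 1 := by
    have h := hm1P.measure_univ
    rw [hγ1, withDensity_apply _ MeasurableSet.univ, Measure.restrict_univ] at h
    exact h
  have hintγ1 : ∫ z, γ1 z ∂ν = 1 := by
    rw [integral_eq_lintegral_of_nonneg_ae hγ1nonneg hγ1meas.aestronglyMeasurable, hlint1]
    simp
  have hg0 : ∫ z, (γ1 z / γ0 z - 1) ∂m0 = 0 := by
    have hratio_int : Integrable (fun z => γ1 z / γ0 z) m0 := by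
      have he : (fun z => γ1 z / γ0 z) = fun z => (γ1 z / γ0 z - 1) + 1 := by funext z; ring
      rw [he]; exact hg1_m0.add (integrable_const 1)
    have hval : ∫ z, γ1 z / γ0 z ∂m0 = 1 := by
      rw [hwd0, integral_withDensity_eq_integral_smul hγ0meas.real_toNNReal]
      have hae : ∫ z, (γ0 z).toNNReal • (γ1 z / γ0 z) ∂ν = ∫ z, γ1 z ∂ν := by
        apply integral_congr_ae
        filter_upwards [hγ0pos] with z hz
        rw [NNReal.smul_def, Real.coe_toNNReal _ hz.le]
        simp only [smul_eq_mul]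
        linear_combination (γ1 z) * mul_inv_cancel₀ hz.ne'
      rw [hae, hintγ1]
    have he2 : ∫ z, (γ1 z / γ0 z - 1) ∂m0
        = (∫ z, γ1 z / γ0 z ∂m0) - ∫ z, (1 : ℝ) ∂m0 :=
      integral_sub hratio_int (integrable_const 1)
    rw [he2, hval]
    simp
  -- step B: change of measure for Qhat
  have hQr_int : Integrable (fun z => Qhat z * (γ1 z / γ0 z)) m0 := by
    have he : (fun z => Qhat z * (γ1 z / γ0 z))
        = fun z => Qhat z * (γ1 z / γ0 z - 1) + Qhat z := by funext z; ring
    rw [he]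
    exact (cs_integrable hQhatmeas.aestronglyMeasurable hgfm hQ2m0 hχint).add hQ1m0
  have hm1val : ∫ z, Qhat z ∂m1 = ∫ z, Qhat z * (γ1 z / γ0 z) ∂m0 := by
    rw [hwd0, hwd1, integral_withDensity_eq_integral_smul hγ1meas.real_toNNReal,
      integral_withDensity_eq_integral_smul hγ0meas.real_toNNReal]
    apply integral_congr_ae
    filter_upwards [hγ0pos, hγ1nonneg] with z h0 h1
    rw [NNReal.smul_def, NNReal.smul_def, Real.coe_toNNReal _ h0.le, Real.coe_toNNReal _ h1]
    simp only [smul_eq_mul]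
    linear_combination (-(Qhat z * γ1 z)) * mul_inv_cancel₀ h0.ne'
  have hQ1m1 : Integrable Qhat m1 := by
    have hQr_int' : Integrable (fun z => Qhat z * (γ1 z / γ0 z))
        (ν.withDensity fun z => ((γ0 z).toNNReal : ℝ≥0∞)) := by
      rw [← hwd0]; exact hQr_int
    have h0' : Integrable (fun z => (γ0 z).toNNReal • (Qhat z * (γ1 z / γ0 z))) ν :=
      (integrable_withDensity_iff_integrable_smul hγ0meas.real_toNNReal).mp hQr_int'
    have h1' : Integrable (fun z => (γ1 z).toNNReal • Qhat z) ν := by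
      apply h0'.congr
      filter_upwards [hγ0pos, hγ1nonneg] with z h0 h1
      rw [NNReal.smul_def, NNReal.smul_def, Real.coe_toNNReal _ h0.le, Real.coe_toNNReal _ h1]
      simp only [smul_eq_mul]
      linear_combination (Qhat z * γ1 z) * mul_inv_cancel₀ h0.ne'
    rw [hwd1]
    exact (integrable_withDensity_iff_integrable_smul hγ1meas.real_toNNReal).mpr h1'
  -- inner expansion
  have hinner : ∀ θ, ∫ z, (Qhat z - μ0) ^ 2 ∂(P θ)
      = R θ + 2 * ((Q θ - μ0) * B θ) + (Q θ - μ0) ^ 2 := by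
    intro θ
    have he : ∫ z, (Qhat z - μ0) ^ 2 ∂(P θ)
        = ∫ z, ((Qhat z - Q θ) ^ 2 + (2 * (Q θ - μ0)) * (Qhat z - Q θ)) + (Q θ - μ0) ^ 2
          ∂(P θ) := by
      congr 1; funext z; ring
    have hi1 : Integrable (fun z => (Qhat z - Q θ)) (P θ) :=
      (hQhatint θ).sub (integrable_const _)
    have hi2 : Integrable
        (fun z => (Qhat z - Q θ) ^ 2 + (2 * (Q θ - μ0)) * (Qhat z - Q θ)) (P θ) :=
      (hdev2int θ).add (hi1.const_mul _)
    rw [he, integral_add hi2 (integrable_const _),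
      integral_add (hdev2int θ) (hi1.const_mul _), integral_const_mul, integral_const,
      hBval θ]
    simp [hRdef]
    ring
  -- cross term
  have hcross_int : Integrable (fun θ => (Q θ - μ0) * B θ) π0 := by
    refine ((hσ0int.add hriskint).div_const 2).mono
      (((hQmeas.sub_const μ0).aestronglyMeasurable).mul hBint0.1)
      (Eventually.of_forall fun θ => ?_)
    have h1 : |(Q θ - μ0) * B θ| ≤ ((Q θ - μ0) ^ 2 + R θ) / 2 := by
      rw [abs_mul]
      have h2 := hBle θ
      nlinarith [abs_nonneg (Q θ - μ0), abs_nonneg (B θ), Real.sqrt_nonneg (R θ),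
        Real.sq_sqrt (hRnn θ), sq_abs (Q θ - μ0), sq_nonneg (|Q θ - μ0| - Real.sqrt (R θ))]
    calc ‖(Q θ - μ0) * B θ‖ = |(Q θ - μ0) * B θ| := rfl
      _ ≤ ((Q θ - μ0) ^ 2 + R θ) / 2 := h1
      _ ≤ ‖((Q θ - μ0) ^ 2 + R θ) / 2‖ := le_abs_self _
  have hσ0nn : 0 ≤ σ0 := hσ0 ▸ Real.sqrt_nonneg _
  have hχnn : 0 ≤ χ := hχ ▸ Real.sqrt_nonneg _
  have hRmeas : AEStronglyMeasurable R π0 := by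
    have : StronglyMeasurable (fun p : Θ × Ω => (Qhat p.2 - Q p.1) ^ 2) :=
      (((hQhatmeas.comp measurable_snd).sub (hQmeas.comp measurable_fst)).pow_const
        2).stronglyMeasurable
    exact this.integral_kernel_prod_right'.aestronglyMeasurable
  have hsqrtR_meas : AEStronglyMeasurable (fun θ => Real.sqrt (R θ)) π0 :=
    (Real.continuous_sqrt.comp_aestronglyMeasurable hRmeas)
  have hRsq_int : Integrable (fun θ => Real.sqrt (R θ) ^ 2) π0 :=
    hriskint.congr (Eventually.of_forall fun θ => (Real.sq_sqrt (hRnn θ)).symm)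
  have habs2_int : Integrable (fun θ => |Q θ - μ0| ^ 2) π0 :=
    hσ0int.congr (Eventually.of_forall fun θ => (sq_abs _).symm)
  have habs_meas : AEStronglyMeasurable (fun θ => |Q θ - μ0|) π0 :=
    ((hQmeas.sub_const μ0).abs).aestronglyMeasurable
  have hsqrtint : Real.sqrt (∫ θ, R θ ∂π0) ≤ ε := by
    calc Real.sqrt (∫ θ, R θ ∂π0) ≤ Real.sqrt (ε ^ 2) := Real.sqrt_le_sqrt hrisk
      _ = ε := Real.sqrt_sq hε
  have hcross_bound : |∫ θ, (Q θ - μ0) * B θ ∂π0| ≤ σ0 * ε := by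
    calc |∫ θ, (Q θ - μ0) * B θ ∂π0| ≤ ∫ θ, |(Q θ - μ0) * B θ| ∂π0 :=
          by simpa only [Real.norm_eq_abs] using
            norm_integral_le_integral_norm (μ := π0) (fun θ => (Q θ - μ0) * B θ)
      _ ≤ ∫ θ, |Q θ - μ0| * Real.sqrt (R θ) ∂π0 := by
          refine integral_mono hcross_int.abs
            (cs_integrable habs_meas hsqrtR_meas habs2_int hRsq_int) (fun θ => ?_)
          rw [abs_mul]
          exact mul_le_mul_of_nonneg_left (hBle θ) (abs_nonneg _)
      _ ≤ |∫ θ, |Q θ - μ0| * Real.sqrt (R θ) ∂π0| := le_abs_self _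
      _ ≤ Real.sqrt (∫ θ, |Q θ - μ0| ^ 2 ∂π0) * Real.sqrt (∫ θ, Real.sqrt (R θ) ^ 2 ∂π0) :=
          cs_bound habs_meas hsqrtR_meas habs2_int hRsq_int
      _ = σ0 * Real.sqrt (∫ θ, R θ ∂π0) := by
          rw [show ∫ θ, |Q θ - μ0| ^ 2 ∂π0 = ∫ θ, (Q θ - μ0) ^ 2 ∂π0 from
              integral_congr_ae (Eventually.of_forall fun θ => sq_abs _),
            show ∫ θ, Real.sqrt (R θ) ^ 2 ∂π0 = ∫ θ, R θ ∂π0 from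
              integral_congr_ae (Eventually.of_forall fun θ => Real.sq_sqrt (hRnn θ)), hσ0]
      _ ≤ σ0 * ε := mul_le_mul_of_nonneg_left hsqrtint hσ0nn
  -- T bound
  have hTeq : ∫ z, (Qhat z - μ0) ^ 2 ∂m0
      = (∫ θ, R θ ∂π0) + 2 * (∫ θ, (Q θ - μ0) * B θ ∂π0) + ∫ θ, (Q θ - μ0) ^ 2 ∂π0 := by
    have h1 := hIntegral_eq π0 ‹_› (fun z => (Qhat z - μ0) ^ 2)
      ((hQhatmeas.sub_const μ0).pow_const 2) (by rw [← hm0def]; exact hdev0sq_m0)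
    rw [← hm0def] at h1
    have hs1' : Integrable (fun θ => R θ + 2 * ((Q θ - μ0) * B θ)) π0 :=
      hriskint.add (hcross_int.const_mul 2)
    rw [h1, integral_congr_ae (Eventually.of_forall hinner),
      integral_add hs1' hσ0int,
      integral_add hriskint (hcross_int.const_mul 2), integral_const_mul]
  have hTle : ∫ z, (Qhat z - μ0) ^ 2 ∂m0 ≤ (ε + σ0) ^ 2 := by
    rw [hTeq]
    have h2 : ∫ θ, (Q θ - μ0) ^ 2 ∂π0 = σ0 ^ 2 := by
      rw [hσ0, Real.sq_sqrt (integral_nonneg fun θ => sq_nonneg _)]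
    have h3 := abs_le.1 hcross_bound
    nlinarith [h3.2, hrisk, h2]
  -- Cauchy–Schwarz final bound
  have hCS : |∫ z, (Qhat z - μ0) * (γ1 z / γ0 z - 1) ∂m0| ≤ (ε + σ0) * χ := by
    have h := cs_bound ((hQhatmeas.sub_const μ0).aestronglyMeasurable) hgfm hdev0sq_m0 hχint
    have hs1 : Real.sqrt (∫ z, (Qhat z - μ0) ^ 2 ∂m0) ≤ ε + σ0 := by
      calc Real.sqrt (∫ z, (Qhat z - μ0) ^ 2 ∂m0) ≤ Real.sqrt ((ε + σ0) ^ 2) :=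
            Real.sqrt_le_sqrt hTle
        _ = ε + σ0 := Real.sqrt_sq (by linarith)
    calc |∫ z, (Qhat z - μ0) * (γ1 z / γ0 z - 1) ∂m0|
        ≤ Real.sqrt (∫ z, (Qhat z - μ0) ^ 2 ∂m0)
          * Real.sqrt (∫ z, (γ1 z / γ0 z - 1) ^ 2 ∂m0) := h
      _ = Real.sqrt (∫ z, (Qhat z - μ0) ^ 2 ∂m0) * χ := by rw [← hχ]
      _ ≤ (ε + σ0) * χ := mul_le_mul_of_nonneg_right hs1 hχnn
  -- bias integrals
  have hQPint0 : Integrable (fun θ => ∫ z, Qhat z ∂(P θ)) π0 := by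
    have he : (fun θ => ∫ z, Qhat z ∂(P θ)) = fun θ => B θ + Q θ := by
      funext θ; rw [hB θ]; ring
    rw [he]; exact hBint0.add hQint0
  have hQPint1 : Integrable (fun θ => ∫ z, Qhat z ∂(P θ)) π1 := by
    have he : (fun θ => ∫ z, Qhat z ∂(P θ)) = fun θ => B θ + Q θ := by
      funext θ; rw [hB θ]; ring
    rw [he]; exact hBint1.add hQint1
  have hB0val : ∫ θ, B θ ∂π0 = (∫ z, Qhat z ∂m0) - μ0 := by
    have h1 : ∫ θ, B θ ∂π0 = (∫ θ, ∫ z, Qhat z ∂(P θ) ∂π0) - ∫ θ, Q θ ∂π0 := by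
      rw [← integral_sub hQPint0 hQint0]
      exact integral_congr_ae (Eventually.of_forall fun θ => hB θ)
    have h2 := hIntegral_eq π0 ‹_› Qhat hQhatmeas (by rw [← hm0def]; exact hQ1m0)
    rw [← hm0def] at h2
    rw [h1, ← h2, hμ0]
  have hB1val : ∫ θ, B θ ∂π1 = (∫ z, Qhat z ∂m1) - μ1 := by
    have h1 : ∫ θ, B θ ∂π1 = (∫ θ, ∫ z, Qhat z ∂(P θ) ∂π1) - ∫ θ, Q θ ∂π1 := by
      rw [← integral_sub hQPint1 hQint1]
      exact integral_congr_ae (Eventually.of_forall fun θ => hB θ)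
    have h2 := hIntegral_eq π1 ‹_› Qhat hQhatmeas (by rw [← hm1def]; exact hQ1m1)
    rw [← hm1def] at h2
    rw [h1, ← h2, hμ1]
  -- difference of marginal means
  have hDval : (∫ z, Qhat z ∂m1) - (∫ z, Qhat z ∂m0)
      = ∫ z, (Qhat z - μ0) * (γ1 z / γ0 z - 1) ∂m0 := by
    rw [hm1val, ← integral_sub hQr_int hQ1m0]
    have hsplit : ∫ z, (Qhat z * (γ1 z / γ0 z) - Qhat z) ∂m0
        = ∫ z, ((Qhat z - μ0) * (γ1 z / γ0 z - 1) + μ0 * (γ1 z / γ0 z - 1)) ∂m0 :=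
      integral_congr_ae (Eventually.of_forall fun z => by ring)
    rw [hsplit, integral_add hQg_m0 (hg1_m0.const_mul μ0), integral_const_mul, hg0,
      mul_zero, add_zero]
  have hkey : (∫ θ, B θ ∂π1) - ∫ θ, B θ ∂π0
      = (∫ z, (Qhat z - μ0) * (γ1 z / γ0 z - 1) ∂m0) - (μ1 - μ0) := by
    rw [hB0val, hB1val, ← hDval]; ring
  have habs := abs_sub_abs_le_abs_sub (μ1 - μ0)
    (∫ z, (Qhat z - μ0) * (γ1 z / γ0 z - 1) ∂m0)
  calc |μ1 - μ0| - (ε + σ0) * χ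
      ≤ |μ1 - μ0| - |∫ z, (Qhat z - μ0) * (γ1 z / γ0 z - 1) ∂m0| := by linarith [hCS]
    _ ≤ |(μ1 - μ0) - ∫ z, (Qhat z - μ0) * (γ1 z / γ0 z - 1) ∂m0| := habs
    _ = |(∫ z, (Qhat z - μ0) * (γ1 z / γ0 z - 1) ∂m0) - (μ1 - μ0)| := abs_sub_comm _ _
    _ = |(∫ θ, B θ ∂π1) - ∫ θ, B θ ∂π0| := by rw [hkey]
end

section
/- (Lemma: control of binned integrals of the triple Haar kernel.) There is an absolute constant C such that the following holds. Let M ≤ k₁ ≤ k₂ ≤ k₃ be positive integers with M dividing k₁, k₁ dividing k₂, and k₂ dividing k₃, and let f be a bounded measurable probability density on [0,1]. For m = 1,…,M let χ_m = [(m−1)/M, m/M). Then for every m, | ∫∫∫_{χ_m×χ_m×χ_m} [ ∫₀¹ K_{k₁}(x,x₁)K_{k₂}(x,x₂)K_{k₃}(x,x₃) dx ] f(x₁)f(x₂)f(x₃) dx₁dx₂dx₃ | ≤ C·(sup_{[0,1]} f)³ / M. -/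
open MeasureTheory Set Filter
open scoped Classical

noncomputable section

/-- Indicator of the interval ((j)/k, (j+1)/k] (0-indexed version of ((j-1)/k, j/k], j=1..k). -/
def haarInd (k j : ℕ) (x : ℝ) : ℝ :=
  if x ∈ Set.Ioc ((j : ℝ) / k) (((j : ℝ) + 1) / k) then 1 else 0

/-- Haar function ψ_{k,j} (0-indexed). -/
def haarFun (k j : ℕ) (x : ℝ) : ℝ := Real.sqrt k * haarInd k j x

/-- Haar projection kernel K_k(x,y) = k·Σ_j 1{x ∈ I_j}1{y ∈ I_j}. -/
def haarKernel (k : ℕ) (x y : ℝ) : ℝ :=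
  (k : ℝ) * ∑ j ∈ Finset.range k, haarInd k j x * haarInd k j y

/-- Haar projection f_k(x) = ∫₀¹ K_k(x,y) f(y) dy. -/
def haarProj (k : ℕ) (f : ℝ → ℝ) (x : ℝ) : ℝ :=
  ∫ y in Set.Icc (0:ℝ) 1, haarKernel k x y * f y

/-- f is a probability density on [0,1]. -/
def IsDensity (f : ℝ → ℝ) : Prop :=
  Measurable f ∧ (∀ x ∈ Set.Icc (0:ℝ) 1, 0 ≤ f x) ∧ (∫ x in Set.Icc (0:ℝ) 1, f x) = 1

/-- Law of an i.i.d. n-sample X_1,…,X_n from density f on [0,1]. -/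
def sampleMeasure (f : ℝ → ℝ) (n : ℕ) : Measure (Fin n → ℝ) :=
  (Measure.pi fun _ : Fin n => volume.restrict (Set.Icc (0:ℝ) 1)).withDensity
    (fun X => ∏ i, ENNReal.ofReal (f (X i)))

/-- Hölder ball H(β,L) of functions on [0,1]. -/
def holderBall (β L : ℝ) : Set (ℝ → ℝ) :=
  {h | (∀ x ∈ Set.Icc (0:ℝ) 1, |h x| ≤ L) ∧
    ∀ x ∈ Set.Icc (0:ℝ) 1, ∀ y ∈ Set.Icc (0:ℝ) 1, |h x - h y| ≤ L * |x - y| ^ β}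

/-- Second-order Haar U-statistic U_n^{(k)}. -/
def Ustat (k n : ℕ) (X : Fin n → ℝ) : ℝ :=
  (1 / ((n : ℝ) * ((n : ℝ) - 1))) *
    ∑ i : Fin n, ∑ j : Fin n, if i ≠ j then haarKernel k (X i) (X j) else 0

/-- Third-order V-statistic over distinct triples. -/
def V3 (n : ℕ) (h : ℝ → ℝ → ℝ → ℝ) (X : Fin n → ℝ) : ℝ :=
  (1 / ((n : ℝ) * ((n : ℝ) - 1) * ((n : ℝ) - 2))) *
    ∑ i1 : Fin n, ∑ i2 : Fin n, ∑ i3 : Fin n,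
      if i1 ≠ i2 ∧ i1 ≠ i3 ∧ i2 ≠ i3 then h (X i1) (X i2) (X i3) else 0

/-- Third-order U-statistic estimator of ∫ f³ built from Haar projection kernels. -/
def phiHat (k1 k2 k3 n : ℕ) (X : Fin n → ℝ) : ℝ :=
  V3 n (fun x1 x2 x3 => ∫ x in Set.Icc (0:ℝ) 1,
      haarKernel k1 x x1 * haarKernel k1 x x2 * haarKernel k1 x x3) X
  + 3 * V3 n (fun x1 x2 x3 => ∫ x in Set.Icc (0:ℝ) 1,
      haarKernel k1 x x1 * (haarKernel k3 x x2 - haarKernel k1 x x2) * haarKernel k1 x x3) X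
  + 3 * V3 n (fun x1 x2 x3 => ∫ x in Set.Icc (0:ℝ) 1,
      haarKernel k1 x x1 * (haarKernel k3 x x2 - haarKernel k1 x x2) *
        (haarKernel k3 x x3 - haarKernel k1 x x3)) X
  + 3 * V3 n (fun x1 x2 x3 => ∫ x in Set.Icc (0:ℝ) 1,
      (haarKernel k2 x x1 - haarKernel k1 x x1) * (haarKernel k2 x x2 - haarKernel k1 x x2) *
        (haarKernel k3 x x3 - haarKernel k2 x x3)) X
  + V3 n (fun x1 x2 x3 => ∫ x in Set.Icc (0:ℝ) 1,
      (haarKernel k2 x x1 - haarKernel k1 x x1) * (haarKernel k2 x x2 - haarKernel k1 x x2) *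
        (haarKernel k2 x x3 - haarKernel k1 x x3)) X

/-- N = largest integer with d^{N-1} ≤ n^{1-2/log log n}. -/
def gridN (d : ℝ) (n : ℕ) : ℕ :=
  Nat.findGreatest (fun N => d ^ (N - 1) ≤ (n : ℝ) ^ (1 - 2 / Real.log (Real.log n))) n

/-- β_j solving d^j·n = n^{2/(1+4β_j)}. -/
def gridBeta (d : ℝ) (n j : ℕ) : ℝ :=
  (2 * Real.log n / Real.log (d ^ j * (n : ℝ)) - 1) / 4

/-- k_j* = (n²/log n)^{1/(1+4β_j)}. -/
def gridKstar (d : ℝ) (n : ℕ) (j : ℕ) : ℝ :=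
  ((n : ℝ) ^ 2 / Real.log n) ^ (1 / (1 + 4 * gridBeta d n j))

/-- s* = smallest j with k_j* ≥ n. -/
def gridS (d : ℝ) (n : ℕ) : ℕ := sInf {j : ℕ | (n : ℝ) ≤ gridKstar d n j}

/-- The Lepski selector ĵ based on the Haar quadratic U-statistics. -/
def lepskiJ (d Copt : ℝ) (n : ℕ) (X : Fin n → ℝ) : ℕ :=
  sInf {j : ℕ | gridS d n ≤ j ∧ j ≤ gridN d n - 1 ∧
    ∀ l : ℕ, j ≤ l → l ≤ gridN d n - 1 →
      (Ustat (⌈gridKstar d n l⌉₊) n X - Ustat (⌈gridKstar d n j⌉₊) n X) ^ 2 ≤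
        Copt ^ 2 * Real.log n * (gridKstar d n l / (n : ℝ) ^ 2)}

/-- Completely degenerate part H of G = K_{k'} − K_k under density f. -/
def degKernel (k k' : ℕ) (f : ℝ → ℝ) (x y : ℝ) : ℝ :=
  (haarKernel k' x y - haarKernel k x y)
  - (∫ y' in Set.Icc (0:ℝ) 1, (haarKernel k' x y' - haarKernel k x y') * f y')
  - (∫ x' in Set.Icc (0:ℝ) 1, (haarKernel k' x' y - haarKernel k x' y) * f x')
  + ∫ x' in Set.Icc (0:ℝ) 1, ∫ y' in Set.Icc (0:ℝ) 1,
      (haarKernel k' x' y' - haarKernel k x' y') * f x' * f y'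



lemma haarInd_eq_indicator (k j : ℕ) :
    haarInd k j = Set.indicator (Set.Ioc ((j:ℝ)/k) (((j:ℝ)+1)/k)) (fun _ => 1) := by
  funext x; simp [haarInd, Set.indicator]

lemma haarInd_nonneg (k j : ℕ) (x : ℝ) : 0 ≤ haarInd k j x := by
  unfold haarInd; split <;> norm_num

lemma haarInd_le_one (k j : ℕ) (x : ℝ) : haarInd k j x ≤ 1 := by
  unfold haarInd; split <;> norm_num

lemma measurable_haarInd (k j : ℕ) : Measurable (haarInd k j) := by
  rw [haarInd_eq_indicator]; exact measurable_const.indicator measurableSet_Ioc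

lemma haarInd_mul_nested {k k' : ℕ} (hk : 0 < k) (hk' : 0 < k') (hdvd : k ∣ k')
    (j j' : ℕ) (x : ℝ) :
    haarInd k j x * haarInd k' j' x = if j = j' / (k' / k) then haarInd k' j' x else 0 := by
  obtain ⟨t, rfl⟩ := hdvd
  have ht : 0 < t := by
    rcases Nat.eq_zero_or_pos t with h | h
    · subst h; simp at hk'
    · exact h
  rw [Nat.mul_div_cancel_left _ hk]
  have hkR : (0:ℝ) < k := by exact_mod_cast hk
  have htR : (0:ℝ) < t := by exact_mod_cast ht
  have hktR : (0:ℝ) < (k:ℝ) * t := by positivity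
  by_cases hj : j = j' / t
  · rw [if_pos hj]
    have h1 : j * t ≤ j' := (Nat.le_div_iff_mul_le ht).mp (le_of_eq hj)
    have h2 : j' + 1 ≤ (j + 1) * t := by
      have hd := Nat.div_add_mod j' t
      have hm := Nat.mod_lt j' ht
      subst hj
      have hx : (j' / t + 1) * t = j' / t * t + t := by ring
      have hcomm : t * (j' / t) = j' / t * t := Nat.mul_comm _ _
      omega
    have h1R : (j:ℝ) * t ≤ j' := by exact_mod_cast h1
    have h2R : (j':ℝ) + 1 ≤ ((j:ℝ) + 1) * t := by exact_mod_cast h2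
    unfold haarInd
    push_cast
    split_ifs with hP hQ hQ
    · norm_num
    · norm_num
    · exfalso
      apply hP
      obtain ⟨hl, hr⟩ := hQ
      constructor
      · calc (j:ℝ)/k ≤ (j':ℝ)/((k:ℝ)*t) := by
              rw [div_le_div_iff₀ hkR hktR]; nlinarith
          _ < x := hl
      · calc x ≤ ((j':ℝ)+1)/((k:ℝ)*t) := hr
          _ ≤ ((j:ℝ)+1)/k := by rw [div_le_div_iff₀ hktR hkR]; nlinarith
    · norm_num
  · rw [if_neg hj]
    unfold haarInd
    push_cast
    split_ifs with hP hQ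
    · exfalso
      obtain ⟨hPl, hPr⟩ := hP
      obtain ⟨hQl, hQr⟩ := hQ
      rcases Nat.lt_or_ge j (j' / t) with h | h
      · have h1 : (j + 1) * t ≤ j' := (Nat.le_div_iff_mul_le ht).mp h
        have h1R : ((j:ℝ) + 1) * t ≤ j' := by exact_mod_cast h1
        have : ((j:ℝ)+1)/k ≤ (j':ℝ)/((k:ℝ)*t) := by
          rw [div_le_div_iff₀ hkR hktR]; nlinarith
        linarith
      · have h' : j' / t < j := lt_of_le_of_ne h (Ne.symm hj)
        have h1 : j' < j * t := (Nat.div_lt_iff_lt_mul ht).mp h'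
        have h1R : (j':ℝ) + 1 ≤ (j:ℝ) * t := by exact_mod_cast Nat.succ_le_of_lt h1
        have : ((j':ℝ)+1)/((k:ℝ)*t) ≤ (j:ℝ)/k := by
          rw [div_le_div_iff₀ hktR hkR]; nlinarith
        linarith
    · norm_num
    · norm_num
    · norm_num

lemma triple_haarInd {k1 k2 k3 : ℕ} (hk1 : 0 < k1) (hk2 : 0 < k2) (hk3 : 0 < k3)
    (h12 : k1 ∣ k2) (h23 : k2 ∣ k3) (j1 j2 j3 : ℕ) (x : ℝ) :
    haarInd k1 j1 x * haarInd k2 j2 x * haarInd k3 j3 x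
      = if j1 = j2 / (k2 / k1) then
          (if j2 = j3 / (k3 / k2) then haarInd k3 j3 x else 0) else 0 := by
  rw [haarInd_mul_nested hk1 hk2 h12]
  simp only [ite_mul, zero_mul]
  rw [haarInd_mul_nested hk2 hk3 h23]

lemma bdd_integrableOn {g : ℝ → ℝ} {s : Set ℝ} (hs : MeasurableSet s) (hvol : volume s ≠ ⊤)
    (hg : Measurable g) {C : ℝ} (hb : ∀ x ∈ s, |g x| ≤ C) : IntegrableOn g s := by
  apply Measure.integrableOn_of_bounded hvol hg.aestronglyMeasurable
  rw [ae_restrict_iff' hs]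
  exact ae_of_all _ hb

lemma integral_haarInd {k j : ℕ} (hk : 0 < k) (hj : j < k) :
    ∫ x in Set.Icc (0:ℝ) 1, haarInd k j x = 1 / k := by
  have hkR : (0:ℝ) < k := by exact_mod_cast hk
  rw [haarInd_eq_indicator, MeasureTheory.setIntegral_indicator measurableSet_Ioc]
  have hsub : Set.Ioc ((j:ℝ)/k) (((j:ℝ)+1)/k) ⊆ Set.Icc 0 1 := by
    intro y hy
    obtain ⟨h1, h2⟩ := hy
    constructor
    · have : (0:ℝ) ≤ (j:ℝ)/k := by positivity
      linarith
    · have hj1 : ((j:ℝ)+1)/k ≤ 1 := by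
        rw [div_le_one hkR]
        have : (j:ℝ) + 1 ≤ k := by exact_mod_cast hj
        linarith
      linarith
  have key : ((j:ℝ)+1)/(k:ℝ) - (j:ℝ)/(k:ℝ) = 1/(k:ℝ) := by field_simp; ring
  rw [Set.inter_eq_self_of_subset_right hsub, MeasureTheory.setIntegral_const, measureReal_def, Real.volume_Ioc,
    smul_eq_mul, mul_one, key, ENNReal.toReal_ofReal (by positivity)]

lemma setIntegral_haarInd_le {k j : ℕ} (hk : 0 < k) {s : Set ℝ} (hs : MeasurableSet s) :
    ∫ x in s, haarInd k j x ≤ 1 / k := by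
  have hkR : (0:ℝ) < k := by exact_mod_cast hk
  rw [haarInd_eq_indicator, MeasureTheory.setIntegral_indicator measurableSet_Ioc,
    MeasureTheory.setIntegral_const, smul_eq_mul, mul_one]
  have h1 : volume (s ∩ Set.Ioc ((j:ℝ)/k) (((j:ℝ)+1)/k)) ≤ ENNReal.ofReal (1/k) := by
    calc volume (s ∩ _) ≤ volume (Set.Ioc ((j:ℝ)/k) (((j:ℝ)+1)/k)) :=
          measure_mono Set.inter_subset_right
      _ = ENNReal.ofReal (1/k) := by
          rw [Real.volume_Ioc]
          congr 1
          field_simp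
          ring
  calc (volume (s ∩ _)).toReal ≤ (ENNReal.ofReal (1/k)).toReal :=
        ENNReal.toReal_mono ENNReal.ofReal_ne_top h1
    _ = 1/k := ENNReal.toReal_ofReal (by positivity)

lemma sum_haarInd_le_one (k : ℕ) (hk : 0 < k) (x : ℝ) :
    ∑ j ∈ Finset.range k, haarInd k j x ≤ 1 := by
  have hkR : (0:ℝ) < k := by exact_mod_cast hk
  unfold haarInd
  rw [Finset.sum_boole]
  norm_cast
  rw [Finset.card_le_one]
  intro a ha b hb
  simp only [Finset.mem_filter, Set.mem_Ioc] at ha hb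
  obtain ⟨-, ha1, ha2⟩ := ha
  obtain ⟨-, hb1, hb2⟩ := hb
  have h1 : (a:ℝ) < (b:ℝ) + 1 := by
    have h := lt_of_lt_of_le ha1 hb2
    rw [div_lt_div_iff₀ hkR hkR] at h
    push_cast at h
    nlinarith
  have h2 : (b:ℝ) < (a:ℝ) + 1 := by
    have h := lt_of_lt_of_le hb1 ha2
    rw [div_lt_div_iff₀ hkR hkR] at h
    push_cast at h
    nlinarith
  have h1' : a < b + 1 := by exact_mod_cast h1
  have h2' : b < a + 1 := by exact_mod_cast h2
  omega

lemma sum_rot (s t u : Finset ℕ) (f : ℕ → ℕ → ℕ → ℝ) :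
    ∑ a ∈ s, ∑ b ∈ t, ∑ c ∈ u, f a b c = ∑ c ∈ u, ∑ b ∈ t, ∑ a ∈ s, f a b c := by
  calc ∑ a ∈ s, ∑ b ∈ t, ∑ c ∈ u, f a b c
      = ∑ b ∈ t, ∑ a ∈ s, ∑ c ∈ u, f a b c := Finset.sum_comm
    _ = ∑ b ∈ t, ∑ c ∈ u, ∑ a ∈ s, f a b c :=
        Finset.sum_congr rfl fun b _ => Finset.sum_comm
    _ = ∑ c ∈ u, ∑ b ∈ t, ∑ a ∈ s, f a b c := Finset.sum_comm

lemma inner_kernel_eq {k1 k2 k3 : ℕ} (hk1 : 0 < k1) (hk2 : 0 < k2) (hk3 : 0 < k3)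
    (h12 : k1 ∣ k2) (h23 : k2 ∣ k3) (x1 x2 x3 : ℝ) :
    (∫ x in Set.Icc (0:ℝ) 1, haarKernel k1 x x1 * haarKernel k2 x x2 * haarKernel k3 x x3)
      = (k1 : ℝ) * k2 * ∑ j3 ∈ Finset.range k3,
          haarInd k1 ((j3 / (k3 / k2)) / (k2 / k1)) x1 * haarInd k2 (j3 / (k3 / k2)) x2 *
            haarInd k3 j3 x3 := by
  have hk3R : ((k3:ℝ)) ≠ 0 := by positivity
  have ht12 : 0 < k2 / k1 := Nat.div_pos (Nat.le_of_dvd hk2 h12) hk1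
  have ht23 : 0 < k3 / k2 := Nat.div_pos (Nat.le_of_dvd hk3 h23) hk2
  -- step 1 : pointwise expansion
  have expand : ∀ x : ℝ, haarKernel k1 x x1 * haarKernel k2 x x2 * haarKernel k3 x x3
      = ∑ j3 ∈ Finset.range k3, ∑ j2 ∈ Finset.range k2, ∑ j1 ∈ Finset.range k1,
          ((k1:ℝ) * k2 * k3 * (haarInd k1 j1 x1 * haarInd k2 j2 x2 * haarInd k3 j3 x3))
            * (haarInd k1 j1 x * haarInd k2 j2 x * haarInd k3 j3 x) := by
    intro x
    unfold haarKernel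
    simp only [Finset.mul_sum, Finset.sum_mul]
    refine Finset.sum_congr rfl fun j1 _ => Finset.sum_congr rfl fun j2 _ =>
      Finset.sum_congr rfl fun j3 _ => by ring
  have hintatom : ∀ j1 j2 j3 : ℕ, Integrable
      (fun x => ((k1:ℝ) * k2 * k3 * (haarInd k1 j1 x1 * haarInd k2 j2 x2 * haarInd k3 j3 x3))
        * (haarInd k1 j1 x * haarInd k2 j2 x * haarInd k3 j3 x))
      (volume.restrict (Set.Icc (0:ℝ) 1)) := by
    intro j1 j2 j3
    apply bdd_integrableOn measurableSet_Icc (by simp [Real.volume_Icc])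
      (measurable_const.mul (((measurable_haarInd k1 j1).mul (measurable_haarInd k2 j2)).mul
        (measurable_haarInd k3 j3)))
      (C := |(k1:ℝ) * k2 * k3 * (haarInd k1 j1 x1 * haarInd k2 j2 x2 * haarInd k3 j3 x3)|)
    intro x _
    show |((k1:ℝ) * k2 * k3 * (haarInd k1 j1 x1 * haarInd k2 j2 x2 * haarInd k3 j3 x3)) *
      (haarInd k1 j1 x * haarInd k2 j2 x * haarInd k3 j3 x)| ≤ _
    rw [abs_mul]
    have h1 : |haarInd k1 j1 x * haarInd k2 j2 x * haarInd k3 j3 x| ≤ 1 := by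
      rw [abs_of_nonneg (mul_nonneg (mul_nonneg (haarInd_nonneg _ _ _) (haarInd_nonneg _ _ _))
        (haarInd_nonneg _ _ _))]
      have p1 : haarInd k1 j1 x * haarInd k2 j2 x ≤ 1 :=
        mul_le_one₀ (haarInd_le_one _ _ _) (haarInd_nonneg _ _ _) (haarInd_le_one _ _ _)
      exact mul_le_one₀ p1 (haarInd_nonneg _ _ _) (haarInd_le_one _ _ _)
    exact mul_le_of_le_one_right (abs_nonneg _) h1
  have hatom : ∀ j1 j2 j3 : ℕ, j3 < k3 →
      (∫ x in Set.Icc (0:ℝ) 1,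
          ((k1:ℝ) * k2 * k3 * (haarInd k1 j1 x1 * haarInd k2 j2 x2 * haarInd k3 j3 x3))
            * (haarInd k1 j1 x * haarInd k2 j2 x * haarInd k3 j3 x))
        = ((k1:ℝ) * k2 * k3 * (haarInd k1 j1 x1 * haarInd k2 j2 x2 * haarInd k3 j3 x3))
            * (if j1 = j2 / (k2 / k1) then
                (if j2 = j3 / (k3 / k2) then 1/(k3:ℝ) else 0) else 0) := by
    intro j1 j2 j3 hj3
    rw [MeasureTheory.integral_const_mul]
    congr 1
    simp only [triple_haarInd hk1 hk2 hk3 h12 h23 j1 j2 j3]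
    by_cases hc1 : j1 = j2 / (k2 / k1)
    · by_cases hc2 : j2 = j3 / (k3 / k2)
      · simp only [hc1, hc2, if_true]
        exact integral_haarInd hk3 hj3
      · simp [hc1, hc2]
    · simp [hc1]
  calc (∫ x in Set.Icc (0:ℝ) 1, haarKernel k1 x x1 * haarKernel k2 x x2 * haarKernel k3 x x3)
      = ∫ x in Set.Icc (0:ℝ) 1, ∑ j3 ∈ Finset.range k3, ∑ j2 ∈ Finset.range k2,
          ∑ j1 ∈ Finset.range k1,
          ((k1:ℝ) * k2 * k3 * (haarInd k1 j1 x1 * haarInd k2 j2 x2 * haarInd k3 j3 x3))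
            * (haarInd k1 j1 x * haarInd k2 j2 x * haarInd k3 j3 x) := by
        exact MeasureTheory.setIntegral_congr_fun measurableSet_Icc fun x _ => expand x
    _ = ∑ j3 ∈ Finset.range k3, ∑ j2 ∈ Finset.range k2, ∑ j1 ∈ Finset.range k1,
          ∫ x in Set.Icc (0:ℝ) 1,
          ((k1:ℝ) * k2 * k3 * (haarInd k1 j1 x1 * haarInd k2 j2 x2 * haarInd k3 j3 x3))
            * (haarInd k1 j1 x * haarInd k2 j2 x * haarInd k3 j3 x) := by
        rw [MeasureTheory.integral_finset_sum _ (fun j3 _ => integrable_finset_sum _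
          (fun j2 _ => integrable_finset_sum _ (fun j1 _ => hintatom j1 j2 j3)))]
        refine Finset.sum_congr rfl fun j3 _ => ?_
        rw [MeasureTheory.integral_finset_sum _
          (fun j2 _ => integrable_finset_sum _ (fun j1 _ => hintatom j1 j2 j3))]
        refine Finset.sum_congr rfl fun j2 _ => ?_
        exact MeasureTheory.integral_finset_sum _ (fun j1 _ => hintatom j1 j2 j3)
    _ = ∑ j3 ∈ Finset.range k3,
          ((k1:ℝ) * k2 * k3 *
            (haarInd k1 ((j3 / (k3 / k2)) / (k2 / k1)) x1 * haarInd k2 (j3 / (k3 / k2)) x2 *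
              haarInd k3 j3 x3)) * (1/(k3:ℝ)) := by
        refine Finset.sum_congr rfl fun j3 hj3 => ?_
        have hj3' : j3 < k3 := Finset.mem_range.mp hj3
        have hv : j3 / (k3 / k2) < k2 :=
          (Nat.div_lt_iff_lt_mul ht23).mpr (by rw [Nat.mul_div_cancel' h23]; exact hj3')
        calc ∑ j2 ∈ Finset.range k2, ∑ j1 ∈ Finset.range k1, _
            = ∑ j2 ∈ Finset.range k2, ∑ j1 ∈ Finset.range k1,
              (if j1 = j2 / (k2 / k1) then
                ((k1:ℝ) * k2 * k3 *
                  (haarInd k1 j1 x1 * haarInd k2 j2 x2 * haarInd k3 j3 x3)) *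
                (if j2 = j3 / (k3 / k2) then 1/(k3:ℝ) else 0) else 0) := by
              refine Finset.sum_congr rfl fun j2 _ => Finset.sum_congr rfl fun j1 _ => ?_
              rw [hatom j1 j2 j3 hj3']
              simp only [mul_ite, mul_zero]
          _ = ∑ j2 ∈ Finset.range k2,
              (if j2 / (k2 / k1) ∈ Finset.range k1 then
                ((k1:ℝ) * k2 * k3 *
                  (haarInd k1 (j2 / (k2 / k1)) x1 * haarInd k2 j2 x2 * haarInd k3 j3 x3)) *
                (if j2 = j3 / (k3 / k2) then 1/(k3:ℝ) else 0) else 0) := by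
              refine Finset.sum_congr rfl fun j2 _ => ?_
              exact Finset.sum_ite_eq' (Finset.range k1) _ _
          _ = ∑ j2 ∈ Finset.range k2,
              (if j2 = j3 / (k3 / k2) then
                ((k1:ℝ) * k2 * k3 *
                  (haarInd k1 (j2 / (k2 / k1)) x1 * haarInd k2 j2 x2 * haarInd k3 j3 x3)) *
                  (1/(k3:ℝ)) else 0) := by
              refine Finset.sum_congr rfl fun j2 hj2 => ?_
              have hj2' : j2 < k2 := Finset.mem_range.mp hj2
              have ha : j2 / (k2 / k1) < k1 :=
                (Nat.div_lt_iff_lt_mul ht12).mpr (by rw [Nat.mul_div_cancel' h12]; exact hj2')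
              rw [if_pos (Finset.mem_range.mpr ha)]
              simp only [mul_ite, mul_zero]
          _ = if j3 / (k3 / k2) ∈ Finset.range k2 then
                ((k1:ℝ) * k2 * k3 *
                  (haarInd k1 ((j3 / (k3 / k2)) / (k2 / k1)) x1 *
                    haarInd k2 (j3 / (k3 / k2)) x2 * haarInd k3 j3 x3)) * (1/(k3:ℝ)) else 0 :=
              Finset.sum_ite_eq' (Finset.range k2) _ _
          _ = _ := by rw [if_pos (Finset.mem_range.mpr hv)]
    _ = (k1 : ℝ) * k2 * ∑ j3 ∈ Finset.range k3,
          haarInd k1 ((j3 / (k3 / k2)) / (k2 / k1)) x1 * haarInd k2 (j3 / (k3 / k2)) x2 *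
            haarInd k3 j3 x3 := by
        rw [Finset.mul_sum]
        refine Finset.sum_congr rfl fun j3 _ => ?_
        field_simp


/-- Lemma: control of binned integrals of the triple Haar kernel. -/
theorem binned_triple_haar_kernel :
    ∃ C > 0, ∀ M k1 k2 k3 : ℕ, 0 < M → M ∣ k1 → k1 ∣ k2 → k2 ∣ k3 →
      M ≤ k1 → k1 ≤ k2 → k2 ≤ k3 →
      ∀ f : ℝ → ℝ, IsDensity f →
      ∀ F : ℝ, (∀ x ∈ Set.Icc (0:ℝ) 1, f x ≤ F) →
      ∀ m : ℕ, 1 ≤ m → m ≤ M →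
        |∫ x1 in Set.Ico (((m : ℝ) - 1) / M) ((m : ℝ) / M),
          ∫ x2 in Set.Ico (((m : ℝ) - 1) / M) ((m : ℝ) / M),
          ∫ x3 in Set.Ico (((m : ℝ) - 1) / M) ((m : ℝ) / M),
            (∫ x in Set.Icc (0:ℝ) 1,
              haarKernel k1 x x1 * haarKernel k2 x x2 * haarKernel k3 x x3) *
              f x1 * f x2 * f x3|
          ≤ C * F ^ 3 / M := by
  refine ⟨1, one_pos, ?_⟩
  intro M k1 k2 k3 hM hMk1 hk12 hk23 hMle h12 h23 f hf F hF m hm1 hmM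
  obtain ⟨hmeas, hnn, hone⟩ := hf
  set χ : Set ℝ := Set.Ico (((m:ℝ) - 1) / M) ((m:ℝ) / M) with hχdef
  have hk1 : 0 < k1 := lt_of_lt_of_le hM hMle
  have hk2 : 0 < k2 := lt_of_lt_of_le hk1 h12
  have hk3 : 0 < k3 := lt_of_lt_of_le hk2 h23
  have hMR : (0:ℝ) < M := by exact_mod_cast hM
  have hk1R : (0:ℝ) < k1 := by exact_mod_cast hk1
  have hk2R : (0:ℝ) < k2 := by exact_mod_cast hk2
  have hk3R : (0:ℝ) < k3 := by exact_mod_cast hk3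
  have hF0 : 0 ≤ F := le_trans (hnn 0 (by norm_num)) (hF 0 (by norm_num))
  have hm1R : (1:ℝ) ≤ m := by exact_mod_cast hm1
  have hmMR : (m:ℝ) ≤ M := by exact_mod_cast hmM
  have hχsub : χ ⊆ Set.Icc (0:ℝ) 1 := by
    intro x hx
    obtain ⟨h1, h2⟩ := hx
    constructor
    · have h0 : (0:ℝ) ≤ ((m:ℝ) - 1) / M := by
        apply div_nonneg _ hMR.le
        linarith
      linarith
    · have : (m:ℝ)/M ≤ 1 := by rw [div_le_one hMR]; exact hmMR
      linarith
  have hχmeas : MeasurableSet χ := measurableSet_Ico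
  have hχvol : volume χ = ENNReal.ofReal (1/M) := by
    rw [hχdef, Real.volume_Ico]
    congr 1
    field_simp
    ring
  have hχfin : volume χ ≠ ⊤ := by rw [hχvol]; exact ENNReal.ofReal_ne_top
  -- integrability of indicator * density on the bin
  have hIf : ∀ k j : ℕ, IntegrableOn (fun x => haarInd k j x * f x) χ := by
    intro k j
    refine bdd_integrableOn hχmeas hχfin ((measurable_haarInd k j).mul hmeas) (C := F) ?_
    intro x hx
    have hx' := hχsub hx
    rw [abs_of_nonneg (mul_nonneg (haarInd_nonneg _ _ _) (hnn x hx'))]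
    calc haarInd k j x * f x ≤ 1 * F :=
          mul_le_mul (haarInd_le_one _ _ _) (hF x hx') (hnn x hx') one_pos.le
      _ = F := one_mul F
  set a : ℕ → ℕ → ℝ := fun k j => ∫ x in χ, haarInd k j x * f x with ha
  have ha_nonneg : ∀ k j, 0 ≤ a k j := by
    intro k j
    exact setIntegral_nonneg hχmeas fun x hx =>
      mul_nonneg (haarInd_nonneg _ _ _) (hnn x (hχsub hx))
  have ha_le : ∀ k j : ℕ, 0 < k → a k j ≤ F / k := by
    intro k j hk
    have hkR : (0:ℝ) < k := by exact_mod_cast hk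
    calc a k j ≤ ∫ x in χ, haarInd k j x * F := by
          refine setIntegral_mono_on (hIf k j) ?_ hχmeas ?_
          · exact bdd_integrableOn hχmeas hχfin ((measurable_haarInd k j).mul measurable_const)
              (C := F) (fun x _ => by
                rw [abs_of_nonneg (mul_nonneg (haarInd_nonneg _ _ _) hF0)]
                calc haarInd k j x * F ≤ 1 * F :=
                      mul_le_mul_of_nonneg_right (haarInd_le_one _ _ _) hF0
                  _ = F := one_mul F)
          · intro x hx
            exact mul_le_mul_of_nonneg_left (hF x (hχsub hx)) (haarInd_nonneg _ _ _)
      _ = (∫ x in χ, haarInd k j x) * F := by rw [integral_mul_const]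
      _ ≤ (1/(k:ℝ)) * F := mul_le_mul_of_nonneg_right (setIntegral_haarInd_le hk hχmeas) hF0
      _ = F / k := by ring
  have hsum_a : ∀ k : ℕ, 0 < k → ∑ j ∈ Finset.range k, a k j ≤ F / M := by
    intro k hk
    have e1 : ∑ j ∈ Finset.range k, a k j
        = ∫ x in χ, ∑ j ∈ Finset.range k, haarInd k j x * f x := by
      rw [MeasureTheory.integral_finset_sum _ (fun j _ => hIf k j)]
    rw [e1]
    have e2 : ∀ x, ∑ j ∈ Finset.range k, haarInd k j x * f x
        = (∑ j ∈ Finset.range k, haarInd k j x) * f x := by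
      intro x; rw [Finset.sum_mul]
    calc ∫ x in χ, ∑ j ∈ Finset.range k, haarInd k j x * f x
        ≤ ∫ _x in χ, F := by
          refine setIntegral_mono_on ?_ ?_ hχmeas ?_
          · exact integrable_finset_sum _ (fun j _ => hIf k j)
          · exact integrableOn_const hχfin
          · intro x hx
            rw [e2]
            have hfx : 0 ≤ f x := hnn x (hχsub hx)
            calc (∑ j ∈ Finset.range k, haarInd k j x) * f x ≤ 1 * f x :=
                  mul_le_mul_of_nonneg_right (sum_haarInd_le_one k hk x) hfx
              _ = f x := one_mul _
              _ ≤ F := hF x (hχsub hx)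
      _ = (volume χ).toReal * F := by rw [MeasureTheory.setIntegral_const, smul_eq_mul, measureReal_def]
      _ = (1/M) * F := by rw [hχvol, ENNReal.toReal_ofReal (by positivity)]
      _ = F / M := by ring
  set u : ℕ → ℕ := fun j => (j / (k3 / k2)) / (k2 / k1) with hu
  set v : ℕ → ℕ := fun j => j / (k3 / k2) with hv
  have hx3 : ∀ x1 x2 : ℝ,
      (∫ x3 in χ, (∫ x in Set.Icc (0:ℝ) 1,
          haarKernel k1 x x1 * haarKernel k2 x x2 * haarKernel k3 x x3) * f x1 * f x2 * f x3)
      = ∑ j ∈ Finset.range k3,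
          ((k1:ℝ) * k2 * (haarInd k1 (u j) x1 * f x1) * (haarInd k2 (v j) x2 * f x2)) *
            a k3 j := by
    intro x1 x2
    have e : ∀ x3 : ℝ,
        (∫ x in Set.Icc (0:ℝ) 1,
            haarKernel k1 x x1 * haarKernel k2 x x2 * haarKernel k3 x x3) * f x1 * f x2 * f x3
        = ∑ j ∈ Finset.range k3,
            ((k1:ℝ) * k2 * (haarInd k1 (u j) x1 * f x1) * (haarInd k2 (v j) x2 * f x2)) *
              (haarInd k3 j x3 * f x3) := by
      intro x3
      rw [inner_kernel_eq hk1 hk2 hk3 hk12 hk23 x1 x2 x3, Finset.mul_sum, Finset.sum_mul,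
        Finset.sum_mul, Finset.sum_mul]
      exact Finset.sum_congr rfl fun j _ => by ring
    rw [MeasureTheory.setIntegral_congr_fun hχmeas (fun x3 _ => e x3)]
    rw [MeasureTheory.integral_finset_sum _ (fun j _ => ((hIf k3 j).const_mul _))]
    exact Finset.sum_congr rfl fun j _ => by rw [MeasureTheory.integral_const_mul]
  have hx2 : ∀ x1 : ℝ,
      (∫ x2 in χ, ∑ j ∈ Finset.range k3,
          ((k1:ℝ) * k2 * (haarInd k1 (u j) x1 * f x1) * (haarInd k2 (v j) x2 * f x2)) * a k3 j)
      = ∑ j ∈ Finset.range k3,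
          ((k1:ℝ) * k2 * (haarInd k1 (u j) x1 * f x1) * a k3 j) * a k2 (v j) := by
    intro x1
    have e : ∀ x2 : ℝ,
        (∑ j ∈ Finset.range k3,
          ((k1:ℝ) * k2 * (haarInd k1 (u j) x1 * f x1) * (haarInd k2 (v j) x2 * f x2)) * a k3 j)
        = ∑ j ∈ Finset.range k3,
          ((k1:ℝ) * k2 * (haarInd k1 (u j) x1 * f x1) * a k3 j) *
            (haarInd k2 (v j) x2 * f x2) :=
      fun x2 => Finset.sum_congr rfl fun j _ => by ring
    rw [MeasureTheory.setIntegral_congr_fun hχmeas (fun x2 _ => e x2)]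
    rw [MeasureTheory.integral_finset_sum _ (fun j _ => ((hIf k2 (v j)).const_mul _))]
    exact Finset.sum_congr rfl fun j _ => by rw [MeasureTheory.integral_const_mul]
  have hx1 :
      (∫ x1 in χ, ∑ j ∈ Finset.range k3,
          ((k1:ℝ) * k2 * (haarInd k1 (u j) x1 * f x1) * a k3 j) * a k2 (v j))
      = ∑ j ∈ Finset.range k3,
          ((k1:ℝ) * k2 * a k3 j * a k2 (v j)) * a k1 (u j) := by
    have e : ∀ x1 : ℝ,
        (∑ j ∈ Finset.range k3,
          ((k1:ℝ) * k2 * (haarInd k1 (u j) x1 * f x1) * a k3 j) * a k2 (v j))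
        = ∑ j ∈ Finset.range k3,
          ((k1:ℝ) * k2 * a k3 j * a k2 (v j)) * (haarInd k1 (u j) x1 * f x1) :=
      fun x1 => Finset.sum_congr rfl fun j _ => by ring
    rw [MeasureTheory.setIntegral_congr_fun hχmeas (fun x1 _ => e x1)]
    rw [MeasureTheory.integral_finset_sum _ (fun j _ => ((hIf k1 (u j)).const_mul _))]
    exact Finset.sum_congr rfl fun j _ => by rw [MeasureTheory.integral_const_mul]
  have step : ∀ x1 : ℝ,
      (∫ x2 in χ, ∫ x3 in χ, (∫ x in Set.Icc (0:ℝ) 1,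
          haarKernel k1 x x1 * haarKernel k2 x x2 * haarKernel k3 x x3) * f x1 * f x2 * f x3)
      = ∑ j ∈ Finset.range k3,
          ((k1:ℝ) * k2 * (haarInd k1 (u j) x1 * f x1) * a k3 j) * a k2 (v j) := by
    intro x1
    rw [MeasureTheory.setIntegral_congr_fun hχmeas (fun x2 _ => hx3 x1 x2)]
    exact hx2 x1
  have key :
      (∫ x1 in χ, ∫ x2 in χ, ∫ x3 in χ, (∫ x in Set.Icc (0:ℝ) 1,
          haarKernel k1 x x1 * haarKernel k2 x x2 * haarKernel k3 x x3) * f x1 * f x2 * f x3)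
      = ∑ j ∈ Finset.range k3,
          ((k1:ℝ) * k2 * a k3 j * a k2 (v j)) * a k1 (u j) := by
    rw [MeasureTheory.setIntegral_congr_fun hχmeas (fun x1 _ => step x1)]
    exact hx1
  rw [key]
  have hterm_nonneg : ∀ j, 0 ≤ ((k1:ℝ) * k2 * a k3 j * a k2 (v j)) * a k1 (u j) := fun j =>
    mul_nonneg (mul_nonneg (mul_nonneg (by positivity) (ha_nonneg _ _)) (ha_nonneg _ _))
      (ha_nonneg _ _)
  rw [abs_of_nonneg (Finset.sum_nonneg fun j _ => hterm_nonneg j)]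
  calc ∑ j ∈ Finset.range k3, ((k1:ℝ) * k2 * a k3 j * a k2 (v j)) * a k1 (u j)
      ≤ ∑ j ∈ Finset.range k3, ((k1:ℝ) * k2 * a k3 j * (F / k2)) * (F / k1) := by
        refine Finset.sum_le_sum fun j _ => ?_
        have hX : (0:ℝ) ≤ (k1:ℝ) * k2 * a k3 j :=
          mul_nonneg (by positivity) (ha_nonneg _ _)
        refine mul_le_mul (mul_le_mul_of_nonneg_left (ha_le k2 (v j) hk2) hX)
          (ha_le k1 (u j) hk1) (ha_nonneg _ _) ?_
        exact mul_nonneg hX (div_nonneg hF0 hk2R.le)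
    _ = (F * F) * ∑ j ∈ Finset.range k3, a k3 j := by
        rw [Finset.mul_sum]
        refine Finset.sum_congr rfl fun j _ => ?_
        field_simp
    _ ≤ (F * F) * (F / M) :=
        mul_le_mul_of_nonneg_left (hsum_a k3 hk3) (by positivity)
    _ = 1 * F ^ 3 / M := by ring
end
end

section
/- (Lemma: bias of the truncated quadratic U-statistic.) Let β ∈ (0,1], L > 0, and let f be a probability density on [0,1] with f ∈ H(β,L). Then for every integer k ≥ 1 and every n ≥ 2, | E_f(U_n^{(k)}) − ∫₀¹ f² | ≤ L²·k^{−2β}. Moreover the bias is nonpositive: E_f(U_n^{(k)}) = ∫₀¹ f_k² ≤ ∫₀¹ f². -/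
open MeasureTheory Set Filter
open scoped Classical

set_option maxHeartbeats 1600000

noncomputable section

namespace BiasAux2

theorem my_pi_integrable {n : ℕ} (μ : Measure ℝ) [SigmaFinite μ]
    (g : Fin n → ℝ → ℝ) (hg : ∀ i, Integrable (g i) μ) :
    Integrable (fun x : Fin n → ℝ => ∏ i, g i (x i)) (Measure.pi fun _ => μ) := by
  induction n with
  | zero =>
    simp only [Finset.univ_eq_empty, Finset.prod_empty]
    rw [integrable_const_iff]
    simp [Measure.pi_empty_univ]
    exact ⟨by simp [Measure.pi_empty_univ]⟩
  | succ n n_ih =>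
      have := ((measurePreserving_piFinSuccAbove (fun _ : Fin (n+1) => μ) 0).symm)
      rw [← this.integrable_comp_emb (MeasurableEquiv.measurableEmbedding _)]
      simp_rw [MeasurableEquiv.piFinSuccAbove_symm_apply, Fin.insertNthEquiv,
        Fin.prod_univ_succ, Fin.insertNth_zero]
      simp only [Fin.zero_succAbove, Function.comp_def, Fin.cons_zero, Fin.cons_succ,
        Equiv.coe_fn_mk]
      have h2 : Integrable (fun (x : Fin n → ℝ) ↦ ∏ j, g (Fin.succ j) (x j))
          (Measure.pi fun _ => μ) := n_ih (fun _ => g _) (fun i => hg _)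
      exact Integrable.mul_prod (hg 0) h2

theorem my_pi_integral {n : ℕ} (μ : Measure ℝ) [SigmaFinite μ] (g : Fin n → ℝ → ℝ) :
    ∫ x : Fin n → ℝ, ∏ i, g i (x i) ∂(Measure.pi fun _ => μ) = ∏ i, ∫ x, g i x ∂μ := by
  induction n with
  | zero =>
      simp only [Finset.univ_eq_empty, Finset.prod_empty, integral_const,
        Measure.pi_empty_univ, measureReal_def, ENNReal.toReal_one, smul_eq_mul, mul_one, one_smul]
  | succ n n_ih =>
      calc
        _ = ∫ x : ℝ × (Fin n → ℝ),
            g 0 x.1 * ∏ i : Fin n, g (Fin.succ i) (x.2 i) ∂(μ.prod (Measure.pi fun _ => μ)) := by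
          rw [← ((measurePreserving_piFinSuccAbove
            (fun _ : Fin (n+1) => μ) 0).symm).integral_comp']
          refine integral_congr_ae (Filter.Eventually.of_forall fun x => ?_)
          simp_rw [MeasurableEquiv.piFinSuccAbove_symm_apply, Fin.insertNthEquiv,
            Equiv.coe_fn_mk, Fin.insertNth_zero, Fin.prod_univ_succ, Fin.cons_zero,
            Fin.cons_succ, cast_eq]
        _ = (∫ x, g 0 x ∂μ) * ∏ i : Fin n, ∫ x, g (Fin.succ i) x ∂μ := by
          rw [← n_ih (fun i => g (Fin.succ i)), ← integral_prod_mul]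
        _ = ∏ i, ∫ x, g i x ∂μ := by rw [Fin.prod_univ_succ]

end BiasAux2

namespace BiasAux

/-- The m-th interval. -/
def I (k m : ℕ) : Set ℝ := Set.Ioc ((m : ℝ) / k) (((m : ℝ) + 1) / k)

lemma haarInd_eq_indicator (k m : ℕ) :
    haarInd k m = (I k m).indicator (fun _ => (1:ℝ)) := by
  funext x; simp [haarInd, I, Set.indicator]

lemma measurable_haarInd (k m : ℕ) : Measurable (haarInd k m) := by
  rw [haarInd_eq_indicator]
  exact measurable_const.indicator measurableSet_Ioc

lemma haarInd_nonneg (k m : ℕ) (x : ℝ) : 0 ≤ haarInd k m x := by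
  unfold haarInd; split <;> norm_num

lemma haarInd_le_one (k m : ℕ) (x : ℝ) : haarInd k m x ≤ 1 := by
  unfold haarInd; split <;> norm_num

lemma abs_haarInd_le_one (k m : ℕ) (x : ℝ) : |haarInd k m x| ≤ 1 := by
  rw [abs_of_nonneg (haarInd_nonneg k m x)]; exact haarInd_le_one k m x

lemma haarInd_mul_self (k m : ℕ) (x : ℝ) :
    haarInd k m x * haarInd k m x = haarInd k m x := by
  unfold haarInd; split <;> norm_num

lemma I_disjoint {k m m' : ℕ} (hk : 0 < k) (h : m ≠ m') {x : ℝ}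
    (h1 : x ∈ I k m) (h2 : x ∈ I k m') : False := by
  have hk' : (0:ℝ) < k := by exact_mod_cast hk
  have key : ∀ a b : ℕ, x ∈ I k a → x ∈ I k b → b ≤ a := by
    intro a b ha hb
    have : (b:ℝ)/k < ((a:ℝ)+1)/k := lt_of_lt_of_le hb.1 ha.2
    have : (b:ℝ) < (a:ℝ)+1 := by
      have := (div_lt_div_iff_of_pos_right hk').mp this
      exact this
    exact_mod_cast Nat.lt_succ_iff.mp (by exact_mod_cast this)
  exact h (le_antisymm (key m' m h2 h1) (key m m' h1 h2))

lemma haarInd_mul_eq_zero {k m m' : ℕ} (hk : 0 < k) (h : m ≠ m') (x : ℝ) :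
    haarInd k m x * haarInd k m' x = 0 := by
  unfold haarInd
  split
  · split
    · exact absurd (I_disjoint hk h (by assumption) (by assumption)) not_false
    · ring
  · ring

lemma I_subset {k m : ℕ} (hm : m < k) : I k m ⊆ Set.Icc (0:ℝ) 1 := by
  have hk' : (0:ℝ) < k := by exact_mod_cast hm.trans_le' (Nat.zero_le m)
  intro x hx
  constructor
  · refine le_trans ?_ hx.1.le
    positivity
  · refine hx.2.trans ?_
    rw [div_le_one hk']
    exact_mod_cast Nat.succ_le_of_lt hm

lemma volume_I (k m : ℕ) (hk : 0 < k) : volume (I k m) = ENNReal.ofReal (1/k) := by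
  rw [I, Real.volume_Ioc]
  congr 1; field_simp; ring

lemma I_length {k m : ℕ} (hk : 0 < k) {x y : ℝ} (hx : x ∈ I k m) (hy : y ∈ I k m) :
    |x - y| ≤ 1/k := by
  have hk' : (0:ℝ) < k := by exact_mod_cast hk
  rw [abs_sub_le_iff]
  constructor
  · have := sub_le_sub hx.2 hy.1.le
    calc x - y ≤ ((m:ℝ)+1)/k - (m:ℝ)/k := this
    _ = 1/k := by field_simp; ring
  · have := sub_le_sub hy.2 hx.1.le
    calc y - x ≤ ((m:ℝ)+1)/k - (m:ℝ)/k := this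
    _ = 1/k := by field_simp; ring

lemma haarInd_sum_eq_one {k : ℕ} (hk : 0 < k) {x : ℝ} (hx : x ∈ Set.Ioc (0:ℝ) 1) :
    ∑ m ∈ Finset.range k, haarInd k m x = 1 := by
  have hk' : (0:ℝ) < k := by exact_mod_cast hk
  set m0 : ℕ := ⌈x * k⌉₊ - 1 with hm0
  have hxk : 0 < x * k := mul_pos hx.1 hk'
  have hceil1 : 1 ≤ ⌈x * k⌉₊ := Nat.one_le_iff_ne_zero.mpr (by
    simp [Nat.ceil_eq_zero, not_le, hxk])
  have hceilk : ⌈x * k⌉₊ ≤ k := by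
    apply Nat.ceil_le.mpr
    calc x * k ≤ 1 * k := by nlinarith [hx.2]
    _ = (k:ℝ) := one_mul _
  have hm0k : m0 < k := by omega
  have hcast : ((m0:ℝ)) = (⌈x * k⌉₊ : ℝ) - 1 := by
    rw [hm0]; push_cast [hceil1]; ring
  have hxI : x ∈ I k m0 := by
    constructor
    · rw [div_lt_iff₀ hk', hcast]
      have := Nat.ceil_lt_add_one (le_of_lt hxk)
      linarith [this]
    · rw [le_div_iff₀ hk', hcast]
      have := Nat.le_ceil (x * k)
      linarith [this]
  rw [Finset.sum_eq_single_of_mem m0 (Finset.mem_range.mpr hm0k)]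
  · simp only [haarInd, I] at hxI ⊢
    exact if_pos hxI
  · intro b _ hb
    have h0 := haarInd_mul_eq_zero hk hb x
    have h1 : haarInd k m0 x = 1 := by
      simp only [haarInd, I] at hxI ⊢
      exact if_pos hxI
    calc haarInd k b x = haarInd k b x * haarInd k m0 x := by rw [h1, mul_one]
    _ = 0 := h0

lemma sq_sum_haarInd {k : ℕ} (hk : 0 < k) (a : ℕ → ℝ) (x : ℝ) :
    (∑ m ∈ Finset.range k, haarInd k m x * a m) ^ 2
      = ∑ m ∈ Finset.range k, haarInd k m x * (a m) ^ 2 := by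
  rw [sq, Finset.sum_mul_sum]
  refine Finset.sum_congr rfl fun m hm => ?_
  rw [Finset.sum_eq_single_of_mem m hm]
  · rw [mul_mul_mul_comm, haarInd_mul_self, sq]
  · intro b _ hb
    rw [mul_mul_mul_comm, haarInd_mul_eq_zero hk (Ne.symm hb) x, zero_mul]


lemma integrableOn_of_bdd {g : ℝ → ℝ} {s : Set ℝ} (hs : MeasurableSet s)
    (hvol : volume s < ⊤) (hg : Measurable g) {C : ℝ} (hC : ∀ x ∈ s, |g x| ≤ C) :
    IntegrableOn g s volume := by
  refine Integrable.mono' (g := fun _ => C) ((integrableOn_const_iff).mpr (Or.inr hvol))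
    hg.aestronglyMeasurable ?_
  filter_upwards [ae_restrict_mem hs] with x hx
  simpa using hC x hx

section PerInterval

variable {β L : ℝ} {f : ℝ → ℝ} {k m : ℕ}

lemma integrableOn_I_f (hfm : Measurable f) (hfb : ∀ x ∈ Set.Icc (0:ℝ) 1, |f x| ≤ L)
    (hm : m < k) : IntegrableOn f (I k m) volume := by
  have hk : 0 < k := Nat.pos_of_ne_zero (by omega)
  refine integrableOn_of_bdd measurableSet_Ioc ?_ hfm (C := L) ?_
  · rw [volume_I k m hk]; exact ENNReal.ofReal_lt_top
  · exact fun x hx => hfb x (I_subset hm hx)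

lemma integrableOn_I_sq (hfm : Measurable f) (hfb : ∀ x ∈ Set.Icc (0:ℝ) 1, |f x| ≤ L)
    (hm : m < k) : IntegrableOn (fun y => f y ^ 2) (I k m) volume := by
  have hk : 0 < k := Nat.pos_of_ne_zero (by omega)
  refine integrableOn_of_bdd measurableSet_Ioc ?_ (hfm.pow_const 2) (C := L^2) ?_
  · rw [volume_I k m hk]; exact ENNReal.ofReal_lt_top
  · intro x hx
    have := hfb x (I_subset hm hx)
    calc |f x ^ 2| = |f x| ^ 2 := by rw [abs_pow]
    _ ≤ L ^ 2 := by nlinarith [abs_nonneg (f x)]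

lemma toReal_volume_I (hk : 0 < k) : (volume (I k m)).toReal = 1 / k := by
  rw [volume_I k m hk, ENNReal.toReal_ofReal (by positivity)]

/-- quadratic expansion: ∫_I (f-a)² = ∫_I f² - 2 a cm + a²/k -/
lemma quad_expand (hfm : Measurable f) (hfb : ∀ x ∈ Set.Icc (0:ℝ) 1, |f x| ≤ L)
    (hm : m < k) (a : ℝ) :
    ∫ y in I k m, (f y - a)^2
      = (∫ y in I k m, f y ^ 2) - 2 * a * (∫ y in I k m, f y) + a^2 * (1/k) := by
  have hk : 0 < k := Nat.pos_of_ne_zero (by omega)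
  have h1 := integrableOn_I_sq hfm hfb hm
  have h2 := integrableOn_I_f hfm hfb hm
  have key : ∀ y : ℝ, (f y - a)^2 = f y ^ 2 - (2*a) * f y + a^2 := by intro y; ring
  simp_rw [key]
  have hI3 : IntegrableOn (fun _ : ℝ => a^2) (I k m) volume := by
    refine (integrableOn_const_iff).mpr (Or.inr ?_)
    rw [volume_I k m hk]; exact ENNReal.ofReal_lt_top
  have h12 : IntegrableOn (fun y => f y ^ 2 - (2*a) * f y) (I k m) volume :=
    h1.sub (h2.const_mul (2*a))
  have e1 : ∫ y in I k m, (f y ^ 2 - (2*a) * f y + a^2)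
      = (∫ y in I k m, (f y ^ 2 - (2*a) * f y)) + ∫ _y in I k m, a^2 :=
    integral_add h12 hI3
  have e2 : ∫ y in I k m, (f y ^ 2 - (2*a) * f y)
      = (∫ y in I k m, f y ^ 2) - ∫ y in I k m, (2*a) * f y := integral_sub h1 (h2.const_mul (2*a))
  have e3 : ∫ y in I k m, (2*a) * f y = (2*a) * ∫ y in I k m, f y := integral_const_mul _ _
  have e4 : ∫ _y in I k m, a^2 = (1/k) * a^2 := by
    rw [integral_const, measureReal_restrict_apply_univ, measureReal_def, toReal_volume_I hk, smul_eq_mul]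
  rw [e1, e2, e3, e4]
  ring

lemma holder_bound (hfm : Measurable f) (hfb : ∀ x ∈ Set.Icc (0:ℝ) 1, |f x| ≤ L)
    (hfH : ∀ x ∈ Set.Icc (0:ℝ) 1, ∀ y ∈ Set.Icc (0:ℝ) 1, |f x - f y| ≤ L * |x - y| ^ β)
    (hβ : 0 < β) (hL : 0 < L) (hm : m < k) {x : ℝ} (hx : x ∈ I k m) :
    |f x - k * (∫ y in I k m, f y)| ≤ L * (1/(k:ℝ)) ^ β := by
  have hk : 0 < k := Nat.pos_of_ne_zero (by omega)
  have hk' : (0:ℝ) < k := by exact_mod_cast hk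
  have h2 := integrableOn_I_f hfm hfb hm
  have hconst : IntegrableOn (fun _ : ℝ => f x) (I k m) volume := by
    refine (integrableOn_const_iff).mpr (Or.inr ?_)
    rw [volume_I k m hk]; exact ENNReal.ofReal_lt_top
  have key : f x - k * (∫ y in I k m, f y) = k * ∫ y in I k m, (f x - f y) := by
    rw [integral_sub hconst h2, integral_const, measureReal_restrict_apply_univ, measureReal_def,
      toReal_volume_I hk, smul_eq_mul]
    field_simp
  have hC : ∀ y ∈ I k m, ‖f x - f y‖ ≤ L * (1/(k:ℝ)) ^ β := by
    intro y hy
    rw [Real.norm_eq_abs]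
    refine (hfH x (I_subset hm hx) y (I_subset hm hy)).trans ?_
    have h1 : |x - y| ^ β ≤ (1/(k:ℝ)) ^ β :=
      Real.rpow_le_rpow (abs_nonneg _) (I_length hk hx hy) hβ.le
    nlinarith [h1]
  have hfin : volume (I k m) < ⊤ := by rw [volume_I k m hk]; exact ENNReal.ofReal_lt_top
  have hnorm := norm_setIntegral_le_of_norm_le_const (f := fun y => f x - f y)
    hfin hC
  rw [Real.norm_eq_abs, measureReal_def, toReal_volume_I hk] at hnorm
  rw [key, abs_mul, abs_of_nonneg hk'.le]
  calc (k:ℝ) * |∫ y in I k m, (f x - f y)| ≤ (k:ℝ) * (L * (1/(k:ℝ)) ^ β * (1/k)) :=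
        mul_le_mul_of_nonneg_left hnorm hk'.le
  _ = L * (1/(k:ℝ)) ^ β := by field_simp

lemma interval_bias (hfm : Measurable f) (hfb : ∀ x ∈ Set.Icc (0:ℝ) 1, |f x| ≤ L)
    (hfH : ∀ x ∈ Set.Icc (0:ℝ) 1, ∀ y ∈ Set.Icc (0:ℝ) 1, |f x - f y| ≤ L * |x - y| ^ β)
    (hβ : 0 < β) (hL : 0 < L) (hm : m < k) :
    0 ≤ (∫ y in I k m, f y ^ 2) - k * (∫ y in I k m, f y)^2 ∧
    (∫ y in I k m, f y ^ 2) - k * (∫ y in I k m, f y)^2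
      ≤ (L * (1/(k:ℝ)) ^ β)^2 * (1/k) := by
  have hk : 0 < k := Nat.pos_of_ne_zero (by omega)
  have hk' : (0:ℝ) < k := by exact_mod_cast hk
  set c := ∫ y in I k m, f y with hc
  have hquad := quad_expand hfm hfb hm ((k:ℝ) * c)
  have hD : ∫ y in I k m, (f y - (k:ℝ)*c)^2
      = (∫ y in I k m, f y ^ 2) - k * c^2 := by
    rw [hquad, ← hc]; field_simp; ring
  constructor
  · rw [← hD]
    exact setIntegral_nonneg measurableSet_Ioc (fun y _ => sq_nonneg _)
  · rw [← hD]
    have hC : ∀ y ∈ I k m, ‖(f y - (k:ℝ)*c)^2‖ ≤ (L * (1/(k:ℝ)) ^ β)^2 := by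
      intro y hy
      have h1 := holder_bound hfm hfb hfH hβ hL hm hy
      rw [Real.norm_eq_abs, abs_pow, ← hc] at *
      have h0 : (0:ℝ) ≤ |f y - (k:ℝ)*c| := abs_nonneg _
      nlinarith
    have hfin : volume (I k m) < ⊤ := by rw [volume_I k m hk]; exact ENNReal.ofReal_lt_top
    have hnorm := norm_setIntegral_le_of_norm_le_const (f := fun y => (f y - (k:ℝ)*c)^2)
      hfin hC
    rw [measureReal_def, toReal_volume_I hk, Real.norm_eq_abs] at hnorm
    exact (le_abs_self _).trans hnorm

lemma I_subset_Ioc {k m : ℕ} (hm : m < k) : I k m ⊆ Set.Ioc (0:ℝ) 1 := by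
  intro x hx
  refine ⟨lt_of_le_of_lt ?_ hx.1, (I_subset hm hx).2⟩
  positivity

lemma haarInd_mul_eq_indicator (k m : ℕ) (g : ℝ → ℝ) (y : ℝ) :
    haarInd k m y * g y = (I k m).indicator g y := by
  simp only [haarInd, Set.indicator, I]
  by_cases h : y ∈ Set.Ioc ((m:ℝ) / k) (((m:ℝ) + 1) / k) <;> simp only [h, ↓reduceIte, one_mul, zero_mul]

/-- decomposition of ∫_{[0,1]} g into the k interval pieces -/
lemma sum_decomp {g : ℝ → ℝ} (hgm : Measurable g) {C : ℝ}
    (hgb : ∀ x ∈ Set.Icc (0:ℝ) 1, |g x| ≤ C) (hk : 0 < k) :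
    ∫ x in Set.Icc (0:ℝ) 1, g x = ∑ m ∈ Finset.range k, ∫ x in I k m, g x := by
  have hInt : IntegrableOn g (Set.Ioc (0:ℝ) 1) volume := by
    refine integrableOn_of_bdd measurableSet_Ioc ?_ hgm (C := C) ?_
    · rw [Real.volume_Ioc]; exact ENNReal.ofReal_lt_top
    · exact fun x hx => hgb x (Set.Ioc_subset_Icc_self hx)
  rw [integral_Icc_eq_integral_Ioc]
  have step1 : ∫ x in Set.Ioc (0:ℝ) 1, g x
      = ∫ x in Set.Ioc (0:ℝ) 1, (∑ m ∈ Finset.range k, haarInd k m x * g x) := by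
    refine setIntegral_congr_fun measurableSet_Ioc (fun x hx => ?_)
    rw [← Finset.sum_mul, haarInd_sum_eq_one hk hx, one_mul]
  rw [step1, integral_finset_sum]
  · refine Finset.sum_congr rfl (fun m hm => ?_)
    simp_rw [haarInd_mul_eq_indicator k _ g]
    have hms : MeasurableSet (I k m) := measurableSet_Ioc
    rw [setIntegral_indicator hms,
      Set.inter_eq_self_of_subset_right (I_subset_Ioc (Finset.mem_range.mp hm))]
  · intro m _
    simp_rw [haarInd_mul_eq_indicator k _ g]
    exact hInt.indicator measurableSet_Ioc

/-- The m-th coefficient. -/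
lemma c_eq (hm : m < k) :
    ∫ y in Set.Icc (0:ℝ) 1, haarInd k m y * f y = ∫ y in I k m, f y := by
  have hms : MeasurableSet (I k m) := measurableSet_Ioc
  simp_rw [haarInd_mul_eq_indicator k m f]
  rw [setIntegral_indicator hms,
    Set.inter_eq_self_of_subset_right (I_subset hm)]

lemma integrableOn_ind_mul (hfm : Measurable f) (hfb : ∀ x ∈ Set.Icc (0:ℝ) 1, |f x| ≤ L)
    (k m : ℕ) : IntegrableOn (fun y => haarInd k m y * f y) (Set.Icc (0:ℝ) 1) volume := by
  refine integrableOn_of_bdd measurableSet_Icc ?_ ((measurable_haarInd k m).mul hfm) (C := L) ?_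
  · rw [Real.volume_Icc]; exact ENNReal.ofReal_lt_top
  · intro x hx
    have h1 := hfb x hx
    have h2 := abs_haarInd_le_one k m x
    have h3 : (0:ℝ) ≤ |f x| := abs_nonneg _
    calc |haarInd k m x * f x| = |haarInd k m x| * |f x| := abs_mul _ _
    _ ≤ 1 * L := by
        apply mul_le_mul h2 h1 h3 zero_le_one
    _ = L := one_mul L

lemma integral_haarInd (hm : m < k) :
    ∫ y in Set.Icc (0:ℝ) 1, haarInd k m y = 1 / k := by
  have hk : 0 < k := Nat.pos_of_ne_zero (by omega)
  have hms : MeasurableSet (I k m) := measurableSet_Ioc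
  rw [haarInd_eq_indicator, setIntegral_indicator hms,
    Set.inter_eq_self_of_subset_right (I_subset hm), integral_const,
    measureReal_restrict_apply_univ, measureReal_def, toReal_volume_I hk, smul_eq_mul, mul_one]

lemma haarProj_eq (hfm : Measurable f) (hfb : ∀ x ∈ Set.Icc (0:ℝ) 1, |f x| ≤ L) (x : ℝ) :
    haarProj k f x
      = (k:ℝ) * ∑ m ∈ Finset.range k,
          haarInd k m x * ∫ y in Set.Icc (0:ℝ) 1, haarInd k m y * f y := by
  unfold haarProj
  have key : ∀ y : ℝ, haarKernel k x y * f y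
      = ∑ m ∈ Finset.range k, ((k:ℝ) * haarInd k m x) * (haarInd k m y * f y) := by
    intro y
    unfold haarKernel
    rw [mul_assoc, Finset.sum_mul, Finset.mul_sum]
    refine Finset.sum_congr rfl (fun m _ => ?_)
    ring
  simp_rw [key]
  rw [integral_finset_sum _ (fun m _ =>
    ((integrableOn_ind_mul hfm hfb k m).const_mul _))]
  rw [Finset.mul_sum]
  refine Finset.sum_congr rfl (fun m _ => ?_)
  rw [integral_const_mul]
  ring

lemma integral_haarProj_sq (hfm : Measurable f) (hfb : ∀ x ∈ Set.Icc (0:ℝ) 1, |f x| ≤ L)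
    (hk : 0 < k) :
    ∫ x in Set.Icc (0:ℝ) 1, haarProj k f x ^ 2
      = (k:ℝ) * ∑ m ∈ Finset.range k,
          (∫ y in Set.Icc (0:ℝ) 1, haarInd k m y * f y) ^ 2 := by
  have hk' : (0:ℝ) < k := by exact_mod_cast hk
  set c : ℕ → ℝ := fun m => ∫ y in Set.Icc (0:ℝ) 1, haarInd k m y * f y with hc
  have key : ∀ x : ℝ, haarProj k f x ^ 2
      = ∑ m ∈ Finset.range k, ((k:ℝ)^2 * (c m)^2) * haarInd k m x := by
    intro x
    rw [haarProj_eq hfm hfb x, mul_pow, sq_sum_haarInd hk c x, Finset.mul_sum]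
    refine Finset.sum_congr rfl (fun m _ => ?_)
    ring
  simp_rw [key]
  rw [integral_finset_sum _ (fun m _ => ?_)]
  · rw [Finset.mul_sum]
    refine Finset.sum_congr rfl (fun m hm => ?_)
    rw [integral_const_mul, integral_haarInd (Finset.mem_range.mp hm)]
    field_simp
    ring
  · refine Integrable.const_mul ?_ _
    refine integrableOn_of_bdd measurableSet_Icc ?_ (measurable_haarInd k m) (C := 1) ?_
    · rw [Real.volume_Icc]; exact ENNReal.ofReal_lt_top
    · exact fun x _ => abs_haarInd_le_one k m x

end PerInterval

section Expectation

open scoped NNReal ENNReal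

variable {f : ℝ → ℝ} {L : ℝ} {k n : ℕ}

lemma expectation_Ustat (hf : IsDensity f) (hfb : ∀ x ∈ Set.Icc (0:ℝ) 1, |f x| ≤ L)
    (hk : 0 < k) (hn : 2 ≤ n) :
    ∫ X, Ustat k n X ∂(sampleMeasure f n)
      = (k:ℝ) * ∑ m ∈ Finset.range k,
          (∫ y in Set.Icc (0:ℝ) 1, haarInd k m y * f y) ^ 2 := by
  obtain ⟨hfm, hfnn, hfint⟩ := hf
  set μ0 : Measure ℝ := volume.restrict (Set.Icc (0:ℝ) 1) with hμ0
  set P : Measure (Fin n → ℝ) := Measure.pi (fun _ : Fin n => μ0) with hP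
  set c : ℕ → ℝ := fun m => ∫ y in Set.Icc (0:ℝ) 1, haarInd k m y * f y with hc
  set A : ℝ := (k:ℝ) * ∑ m ∈ Finset.range k, (c m) ^ 2 with hA
  haveI hprob0 : IsProbabilityMeasure μ0 := ⟨by
    rw [hμ0, Measure.restrict_apply_univ, Real.volume_Icc]; norm_num⟩
  haveI hprobP : IsProbabilityMeasure P := by rw [hP]; infer_instance
  -- the density as an ℝ≥0-valued function
  have hdens : sampleMeasure f n
      = P.withDensity (fun X => ((∏ i, Real.toNNReal (f (X i)) : ℝ≥0) : ℝ≥0∞)) := by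
    unfold sampleMeasure
    rw [hP, hμ0]
    congr 1
    funext X
    rw [ENNReal.coe_finset_prod]
    rfl
  have hmeasN : Measurable fun X : Fin n → ℝ => (∏ i, Real.toNNReal (f (X i)) : ℝ≥0) :=
    Finset.measurable_prod _ (fun i _ =>
      measurable_real_toNNReal.comp (hfm.comp (measurable_pi_apply i)))
  rw [hdens, integral_withDensity_eq_integral_smul hmeasN]
  -- almost every sample lies in the cube
  have hae : ∀ᵐ X ∂P, ∀ i, X i ∈ Set.Icc (0:ℝ) 1 := by
    have hSm : MeasurableSet (Set.pi Set.univ (fun _ : Fin n => Set.Icc (0:ℝ) 1)) :=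
      MeasurableSet.univ_pi (fun _ => measurableSet_Icc)
    have hS1 : P (Set.pi Set.univ (fun _ : Fin n => Set.Icc (0:ℝ) 1)) = 1 := by
      rw [hP, Measure.pi_pi]
      have : μ0 (Set.Icc (0:ℝ) 1) = 1 := by
        rw [hμ0, Measure.restrict_apply measurableSet_Icc, Set.inter_self, Real.volume_Icc]
        norm_num
      simp [this]
    have hcompl : P (Set.pi Set.univ (fun _ : Fin n => Set.Icc (0:ℝ) 1))ᶜ = 0 := by
      rw [measure_compl hSm (measure_ne_top P _), hS1, measure_univ, tsub_self]
    have hseteq : {X : Fin n → ℝ | ¬ ∀ i, X i ∈ Set.Icc (0:ℝ) 1}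
        = (Set.pi Set.univ (fun _ : Fin n => Set.Icc (0:ℝ) 1))ᶜ := by
      ext X
      simp only [Set.mem_setOf_eq, Set.mem_compl_iff, Set.mem_pi, Set.mem_univ, true_implies]
    rw [ae_iff, hseteq]
    exact hcompl
  -- replace the NNReal weight by the real product of densities
  have hcongr : (fun X => (∏ i, Real.toNNReal (f (X i)) : ℝ≥0) • Ustat k n X)
      =ᵐ[P] fun X => (∏ i, f (X i)) * Ustat k n X := by
    filter_upwards [hae] with X hX
    rw [NNReal.smul_def, smul_eq_mul, NNReal.coe_prod]
    congr 1
    exact Finset.prod_congr rfl (fun i _ => Real.coe_toNNReal _ (hfnn _ (hX i)))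
  rw [integral_congr_ae hcongr]
  -- the building blocks
  set G : ℕ → Fin n → Fin n → Fin n → ℝ → ℝ :=
    fun m i j l y => (if l = i ∨ l = j then haarInd k m y else 1) * f y with hG
  set F : Fin n → Fin n → (Fin n → ℝ) → ℝ :=
    fun i j X => (∏ l, f (X l)) * (if i ≠ j then haarKernel k (X i) (X j) else 0) with hF
  have hGint : ∀ m i j l, Integrable (G m i j l) μ0 := by
    intro m i j l
    refine integrableOn_of_bdd measurableSet_Icc ?_ ?_ (C := 1 * L) ?_
    · rw [Real.volume_Icc]; exact ENNReal.ofReal_lt_top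
    · by_cases h : l = i ∨ l = j
      · simp only [hG, if_pos h]
        exact (measurable_haarInd k m).mul hfm
      · simp only [hG, if_neg h]
        exact measurable_const.mul hfm
    · intro x hx
      have h1 := hfb x hx
      have h3 : (0:ℝ) ≤ |f x| := abs_nonneg _
      have h2 : |if l = i ∨ l = j then haarInd k m x else 1| ≤ 1 := by
        split
        · exact abs_haarInd_le_one k m x
        · norm_num
      calc |G m i j l x| = |if l = i ∨ l = j then haarInd k m x else 1| * |f x| := abs_mul _ _
      _ ≤ 1 * L := mul_le_mul h2 h1 h3 zero_le_one
  have hGval : ∀ m i j l, ∫ y, G m i j l y ∂μ0 = if l = i ∨ l = j then c m else 1 := by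
    intro m i j l
    by_cases h : l = i ∨ l = j
    · simp only [hG, if_pos h]; rfl
    · simp only [hG, if_neg h, one_mul]
      exact hfint
  have hprodG : ∀ m i j, i ≠ j → ∀ X : Fin n → ℝ,
      ∏ l, G m i j l (X l) = haarInd k m (X i) * haarInd k m (X j) * ∏ l, f (X l) := by
    intro m i j hij X
    have e1 : ∏ l, G m i j l (X l)
        = (∏ l, (if l = i ∨ l = j then haarInd k m (X l) else 1)) * ∏ l, f (X l) := by
      rw [← Finset.prod_mul_distrib]
    rw [e1]
    congr 1
    have e2 : ∀ l : Fin n, (l = i ∨ l = j) ↔ l ∈ ({i, j} : Finset (Fin n)) := by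
      intro l; simp
    simp_rw [e2]
    rw [Finset.prod_ite_mem, Finset.univ_inter, Finset.prod_pair hij]
  have hFeq : ∀ i j, i ≠ j → ∀ X : Fin n → ℝ,
      F i j X = ∑ m ∈ Finset.range k, (k:ℝ) * ∏ l, G m i j l (X l) := by
    intro i j hij X
    simp only [hF, if_pos hij]
    unfold haarKernel
    rw [mul_comm, mul_assoc, Finset.sum_mul, Finset.mul_sum]
    refine Finset.sum_congr rfl (fun m _ => ?_)
    rw [hprodG m i j hij X]
  have hPint : ∀ m i j, Integrable (fun X => ∏ l, G m i j l (X l)) P :=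
    fun m i j => BiasAux2.my_pi_integrable μ0 _ (fun l => hGint m i j l)
  have hFint : ∀ i j, Integrable (F i j) P := by
    intro i j
    by_cases hij : i = j
    · have : F i j = fun _ => 0 := by
        funext X; simp [hF, hij]
      rw [this]
      exact integrable_zero _ _ _
    · have : F i j = fun X => ∑ m ∈ Finset.range k, (k:ℝ) * ∏ l, G m i j l (X l) :=
        funext (hFeq i j hij)
      rw [this]
      exact integrable_finset_sum _ (fun m _ => (hPint m i j).const_mul _)
  have hFval : ∀ i j, ∫ X, F i j X ∂P = if i = j then 0 else A := by
    intro i j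
    by_cases hij : i = j
    · rw [if_pos hij]
      have : F i j = fun _ => 0 := by funext X; simp [hF, hij]
      rw [this, integral_zero]
    · rw [if_neg hij]
      have : F i j = fun X => ∑ m ∈ Finset.range k, (k:ℝ) * ∏ l, G m i j l (X l) :=
        funext (hFeq i j hij)
      rw [this, integral_finset_sum _ (fun m _ => (hPint m i j).const_mul _)]
      have e3 : ∀ m, ∫ X, (k:ℝ) * ∏ l, G m i j l (X l) ∂P = (k:ℝ) * (c m)^2 := by
        intro m
        rw [integral_const_mul, BiasAux2.my_pi_integral μ0 (fun l => G m i j l)]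
        congr 1
        have e4 : ∀ l : Fin n, (l = i ∨ l = j) ↔ l ∈ ({i, j} : Finset (Fin n)) := by
          intro l; simp
        simp_rw [hGval m i j, e4]
        rw [Finset.prod_ite_mem, Finset.univ_inter, Finset.prod_pair hij, sq]
      simp_rw [e3]
      rw [hA, Finset.mul_sum]
  -- now assemble
  have hexp : (fun X => (∏ i, f (X i)) * Ustat k n X)
      = fun X => (1/((n:ℝ)*((n:ℝ)-1))) * ∑ i : Fin n, ∑ j : Fin n, F i j X := by
    funext X
    unfold Ustat
    simp only [hF]
    have e : ∑ i : Fin n, ∑ j : Fin n,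
        (∏ l, f (X l)) * (if i ≠ j then haarKernel k (X i) (X j) else 0)
        = (∏ l, f (X l)) * ∑ i : Fin n, ∑ j : Fin n,
            (if i ≠ j then haarKernel k (X i) (X j) else 0) := by
      rw [Finset.mul_sum]
      exact Finset.sum_congr rfl fun i _ => (Finset.mul_sum _ _ _).symm
    rw [e]
    ring
  rw [hexp, integral_const_mul, integral_finset_sum _
    (fun i _ => integrable_finset_sum _ (fun j _ => hFint i j))]
  have hsum : ∀ i : Fin n, ∫ X, ∑ j : Fin n, F i j X ∂P = ∑ j : Fin n, if i = j then 0 else A := by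
    intro i
    rw [integral_finset_sum _ (fun j _ => hFint i j)]
    exact Finset.sum_congr rfl (fun j _ => hFval i j)
  simp_rw [hsum]
  have hinner : ∀ i : Fin n, (∑ j : Fin n, if i = j then (0:ℝ) else A) = (n:ℝ) * A - A := by
    intro i
    have e5 : ∀ j : Fin n, (if i = j then (0:ℝ) else A) = A - (if i = j then A else 0) := by
      intro j; split <;> ring
    simp_rw [e5]
    rw [Finset.sum_sub_distrib, Finset.sum_const, Finset.card_univ, Fintype.card_fin,
      Finset.sum_ite_eq, if_pos (Finset.mem_univ i)]
    simp [nsmul_eq_mul]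
  simp_rw [hinner]
  rw [Finset.sum_const, Finset.card_univ, Fintype.card_fin, nsmul_eq_mul]
  have hn' : (2:ℝ) ≤ (n:ℝ) := by exact_mod_cast hn
  have hn0 : (n:ℝ) ≠ 0 := by linarith
  have hn1 : (n:ℝ) - 1 ≠ 0 := by intro h; linarith [h]
  rw [hA]
  field_simp

end Expectation

end BiasAux

/-- Lemma: bias of the truncated quadratic U-statistic. -/
theorem bias_truncated_quadratic (β L : ℝ) (hβ : β ∈ Set.Ioc (0:ℝ) 1) (hL : 0 < L)
    (f : ℝ → ℝ) (hf : IsDensity f) (hfH : f ∈ holderBall β L)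
    (k n : ℕ) (hk : 1 ≤ k) (hn : 2 ≤ n) :
    |(∫ X, Ustat k n X ∂(sampleMeasure f n)) - ∫ x in Set.Icc (0:ℝ) 1, f x ^ 2|
        ≤ L ^ 2 * (k : ℝ) ^ (-(2 * β)) ∧
    (∫ X, Ustat k n X ∂(sampleMeasure f n)) = (∫ x in Set.Icc (0:ℝ) 1, haarProj k f x ^ 2) ∧
    (∫ x in Set.Icc (0:ℝ) 1, haarProj k f x ^ 2) ≤ ∫ x in Set.Icc (0:ℝ) 1, f x ^ 2 := by
  obtain ⟨hβ0, hβ1⟩ := hβ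
  obtain ⟨hfm, hfnn, hfint⟩ := hf
  obtain ⟨hfb, hfH⟩ := hfH
  have hk0 : 0 < k := hk
  have hk' : (0:ℝ) < k := by exact_mod_cast hk0
  set c : ℕ → ℝ := fun m => ∫ y in Set.Icc (0:ℝ) 1, haarInd k m y * f y with hc
  set S : ℝ := (k:ℝ) * ∑ m ∈ Finset.range k, (c m) ^ 2 with hS
  set T : ℝ := ∫ x in Set.Icc (0:ℝ) 1, f x ^ 2 with hT
  have hE : ∫ X, Ustat k n X ∂(sampleMeasure f n) = S :=
    BiasAux.expectation_Ustat ⟨hfm, hfnn, hfint⟩ hfb hk0 hn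
  have hP2 : ∫ x in Set.Icc (0:ℝ) 1, haarProj k f x ^ 2 = S :=
    BiasAux.integral_haarProj_sq hfm hfb hk0
  have hb2 : ∀ x ∈ Set.Icc (0:ℝ) 1, |f x ^ 2| ≤ L ^ 2 := by
    intro x hx
    have h1 := hfb x hx
    calc |f x ^ 2| = |f x| ^ 2 := by rw [abs_pow]
    _ ≤ L ^ 2 := by nlinarith [abs_nonneg (f x)]
  have hdecomp : T = ∑ m ∈ Finset.range k, ∫ x in BiasAux.I k m, f x ^ 2 :=
    BiasAux.sum_decomp (hfm.pow_const 2) hb2 hk0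
  have hkey : T - S = ∑ m ∈ Finset.range k,
      ((∫ x in BiasAux.I k m, f x ^ 2) - (k:ℝ) * (c m) ^ 2) := by
    rw [hdecomp, hS, Finset.mul_sum, Finset.sum_sub_distrib]
  have hbnd : ∀ m ∈ Finset.range k,
      0 ≤ (∫ x in BiasAux.I k m, f x ^ 2) - (k:ℝ) * (c m) ^ 2 ∧
      (∫ x in BiasAux.I k m, f x ^ 2) - (k:ℝ) * (c m) ^ 2
        ≤ (L * (1/(k:ℝ)) ^ β) ^ 2 * (1/(k:ℝ)) := by
    intro m hm
    have hm' := Finset.mem_range.mp hm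
    have hceq : c m = ∫ y in BiasAux.I k m, f y := BiasAux.c_eq hm'
    rw [hceq]
    exact BiasAux.interval_bias hfm hfb hfH hβ0 hL hm'
  have h1 : 0 ≤ T - S := by
    rw [hkey]
    exact Finset.sum_nonneg (fun m hm => (hbnd m hm).1)
  have h2 : T - S ≤ (k:ℝ) * ((L * (1/(k:ℝ)) ^ β) ^ 2 * (1/(k:ℝ))) := by
    rw [hkey]
    calc ∑ m ∈ Finset.range k, ((∫ x in BiasAux.I k m, f x ^ 2) - (k:ℝ) * (c m) ^ 2)
        ≤ ∑ _m ∈ Finset.range k, (L * (1/(k:ℝ)) ^ β) ^ 2 * (1/(k:ℝ)) :=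
          Finset.sum_le_sum (fun m hm => (hbnd m hm).2)
    _ = (k:ℝ) * ((L * (1/(k:ℝ)) ^ β) ^ 2 * (1/(k:ℝ))) := by
          rw [Finset.sum_const, Finset.card_range, nsmul_eq_mul]
  have hrpow : (k:ℝ) * ((L * (1/(k:ℝ)) ^ β) ^ 2 * (1/(k:ℝ))) = L ^ 2 * (k:ℝ) ^ (-(2*β)) := by
    have e0 : (k:ℝ) * ((L * (1/(k:ℝ)) ^ β) ^ 2 * (1/(k:ℝ))) = L ^ 2 * ((1/(k:ℝ)) ^ β) ^ 2 := by
      field_simp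
    rw [e0]
    congr 1
    have e1 : ((1/(k:ℝ)) ^ β) ^ (2:ℕ) = (1/(k:ℝ)) ^ (β * 2) := by
      rw [← Real.rpow_natCast ((1/(k:ℝ)) ^ β) 2, ← Real.rpow_mul (by positivity)]
      norm_num
    rw [e1, one_div, Real.inv_rpow hk'.le, ← Real.rpow_neg hk'.le]
    ring_nf
  have h2' : T - S ≤ L ^ 2 * (k:ℝ) ^ (-(2*β)) := by rw [← hrpow]; exact h2
  refine ⟨?_, ?_, ?_⟩
  · rw [hE, abs_sub_comm, abs_of_nonneg h1]
    exact h2'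
  · rw [hE, hP2]
  · rw [hP2]
    linarith
end
end
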